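/- arXiv:1404.0969 — 4 statements merged into one kernel-verified Lean document; each statement's English description precedes it below -/
import Mathlib

section
/- Suppose p ≡ 1 (mod 4). Then the sum over all (α,β,γ) ∈ F³ of T(α,β,γ)² equals p^{3m}·(2p^m − 1). -/
/-- The exponential sum `T(α,β,γ) = ∑_{x ∈ F} ζ_p^{Tr(α x^{p^{2k}+1} + β x^{p^k+1} + γ x²)}`. -/
noncomputable def expSumT (p k : ℕ) (F : Type*) [Field F] [Fintype F] [Algebra (ZMod p) F]
    (α β γ : F) : ℂ :=
  ∑ x : F, Complex.exp (2 * (Real.pi : ℂ) * Complex.I *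
    ((Algebra.trace (ZMod p) F
      (α * x ^ (p ^ (2 * k) + 1) + β * x ^ (p ^ k + 1) + γ * x ^ 2)).val : ℂ) / (p : ℂ))


open Complex Finset

noncomputable def eC (p : ℕ) (c : ZMod p) : ℂ :=
  Complex.exp (2 * (Real.pi : ℂ) * Complex.I * ((c.val : ℕ) : ℂ) / (p : ℂ))

lemma eC_def' (p : ℕ) [NeZero p] (c : ZMod p) :
    eC p c = Complex.exp (2 * (Real.pi : ℂ) * Complex.I / p) ^ c.val := by
  rw [eC, ← Complex.exp_nat_mul]; congr 1; ring

lemma eC_root (p : ℕ) [NeZero p] :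
    Complex.exp (2 * (Real.pi : ℂ) * Complex.I / p) ^ p = 1 := by
  rw [← Complex.exp_nat_mul]
  have hp : (p : ℂ) ≠ 0 := Nat.cast_ne_zero.2 (NeZero.ne p)
  have : (p:ℂ) * (2 * (Real.pi:ℂ) * Complex.I / p) = 2 * Real.pi * Complex.I := by field_simp
  rw [this]
  simpa using Complex.exp_two_pi_mul_I

lemma eC_add (p : ℕ) [NeZero p] (a b : ZMod p) : eC p (a + b) = eC p a * eC p b := by
  rw [eC_def', eC_def', eC_def', ← pow_add, ZMod.val_add]
  conv_rhs => rw [← Nat.mod_add_div (a.val + b.val) p]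
  rw [pow_add, pow_mul, eC_root, one_pow, mul_one]

lemma eC_zero (p : ℕ) [NeZero p] : eC p 0 = 1 := by simp [eC]

lemma eC_ne_one (p : ℕ) [NeZero p] {c : ZMod p} (hc : c ≠ 0) : eC p c ≠ 1 := by
  have hv : 0 < c.val := by
    have : c.val ≠ 0 := fun h => hc ((ZMod.val_eq_zero c).mp h)
    exact Nat.pos_of_ne_zero this
  have hvp : c.val < p := ZMod.val_lt c
  intro h
  rw [eC, Complex.exp_eq_one_iff] at h
  obtain ⟨n, hn⟩ := h
  have hπ : (2 * (Real.pi:ℂ) * Complex.I) ≠ 0 := by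
    simp [Real.pi_ne_zero, Complex.I_ne_zero]
  have hp0 : (p : ℂ) ≠ 0 := Nat.cast_ne_zero.2 (NeZero.ne p)
  have hcv : ((c.val : ℂ)) = n * p := by
    have h2 := congrArg (· * (p:ℂ)) hn
    simp only [div_mul_cancel₀ _ hp0] at h2
    have h3 : (2 * (Real.pi:ℂ) * Complex.I) * (c.val : ℂ)
        = (2 * (Real.pi:ℂ) * Complex.I) * (n * p) := by linear_combination h2
    exact mul_left_cancel₀ hπ h3
  have : (c.val : ℤ) = n * p := by exact_mod_cast hcv
  have hdvd : (p:ℤ) ∣ (c.val : ℤ) := ⟨n, by linarith⟩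
  have : (p:ℕ) ∣ c.val := Int.ofNat_dvd.mp (by exact_mod_cast hdvd)
  exact absurd (Nat.le_of_dvd hv this) (not_le.mpr hvp)

lemma sum_comm3 {ι M : Type*} [Fintype ι] [AddCommMonoid M] (f : ι → ι → ι → M) :
    ∑ a : ι, ∑ x : ι, ∑ y : ι, f a x y = ∑ x : ι, ∑ y : ι, ∑ a : ι, f a x y := by
  rw [Finset.sum_comm]
  exact Finset.sum_congr rfl fun x _ => Finset.sum_comm


theorem sum_T_sq_of_one_mod_four (p m k : ℕ) (hp : p.Prime) (hp4 : p % 4 = 1)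
    (hm : Odd m) (hm5 : 5 ≤ m) (hk : 0 < k) (hgcd : Nat.gcd m k = 1)
    (F : Type*) [Field F] [Fintype F] [Algebra (ZMod p) F]
    (hF : Fintype.card F = p ^ m) :
    ∑ α : F, ∑ β : F, ∑ γ : F, (expSumT p k F α β γ) ^ 2
      = (p : ℂ) ^ (3 * m) * (2 * (p : ℂ) ^ m - 1) := by
  classical
  haveI : Fact p.Prime := ⟨hp⟩
  have hcharF : CharP F p := charP_of_injective_algebraMap' (A := F) (ZMod p) p
  have hring : ringChar F = p := by
    haveI := hcharF
    exact ringChar.eq F p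
  have keynd : ∀ (p' : ℕ) (h : ringChar F = p') (inst : Algebra (ZMod p') F),
      ∀ u : F, u ≠ 0 → ∃ b : F, Algebra.trace (ZMod p') F (u*b) ≠ 0 := by
    intro p' h inst u hu
    subst h
    exact FiniteField.trace_to_zmod_nondegenerate F hu
  have hnd := keynd p hring inferInstance
  haveI : NeZero p := ⟨hp.ne_zero⟩
  set q : ℂ := (p:ℂ)^m with hq
  set a1 : ℕ := p^(2*k)+1 with ha1
  set a2 : ℕ := p^k+1 with ha2
  set ψ : F → ℂ := fun u => eC p (Algebra.trace (ZMod p) F u) with hψ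
  have ψ_add : ∀ u v : F, ψ (u+v) = ψ u * ψ v := by
    intro u v; simp only [hψ, map_add, eC_add]
  -- orthogonality
  have hS : ∀ u : F, (∑ α : F, ψ (α * u)) = if u = 0 then q else 0 := by
    intro u
    by_cases hu : u = 0
    · subst hu
      simp only [mul_zero, hψ, map_zero, eC_zero, if_true]
      rw [Finset.sum_const, Finset.card_univ, hF]
      push_cast [hq]
      ring
    · rw [if_neg hu]
      obtain ⟨b, hb⟩ := hnd u hu
      have h1 : ψ (b*u) ≠ 1 := by
        rw [hψ]
        exact eC_ne_one p (by rwa [mul_comm] at hb)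
      have hshift : ψ (b*u) * (∑ α : F, ψ (α*u)) = ∑ α : F, ψ (α*u) := by
        rw [Finset.mul_sum]
        have he := Equiv.sum_comp (Equiv.addLeft b) (fun α : F => ψ (α * u))
        calc ∑ α : F, ψ (b*u) * ψ (α*u)
            = ∑ α : F, ψ ((b + α) * u) := by
              apply Finset.sum_congr rfl
              intro α _
              rw [← ψ_add]
              congr 1
              ring
          _ = ∑ α : F, ψ (α * u) := he
      have h0 : (ψ (b*u) - 1) * (∑ α : F, ψ (α*u)) = 0 := by
        linear_combination hshift
      rcases mul_eq_zero.mp h0 with h | h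
      · exact absurd (by linear_combination h) h1
      · exact h
  -- unfold T and square it
  have hsq : ∀ α β γ : F, (expSumT p k F α β γ)^2
      = ∑ x : F, ∑ y : F,
          ψ (α * (x^a1 + y^a1)) * ψ (β * (x^a2 + y^a2)) * ψ (γ * (x^2 + y^2)) := by
    intro α β γ
    have hT : expSumT p k F α β γ = ∑ x : F, ψ (α * x ^ a1 + β * x ^ a2 + γ * x^2) := rfl
    rw [hT, sq, Finset.sum_mul_sum]
    apply Finset.sum_congr rfl; intro x _
    apply Finset.sum_congr rfl; intro y _
    have h3 : ∀ u v w : F, ψ u * ψ v * ψ w = ψ (u+v+w) := by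
      intro u v w; rw [ψ_add, ψ_add]
    rw [h3, ← ψ_add]
    congr 1
    ring
  -- square root of -1
  obtain ⟨j, hj⟩ : IsSquare (-1 : ZMod p) := ZMod.exists_sq_eq_neg_one_iff.mpr (by omega)
  set i : F := algebraMap (ZMod p) F j with hi
  have hi2 : i^2 = -1 := by
    rw [sq, hi, ← map_mul, ← hj, map_neg, map_one]
  have hi4 : i^4 = 1 := by
    have : i^4 = (i^2)^2 := by ring
    rw [this, hi2]; ring
  have hipow : ∀ n : ℕ, n % 4 = 2 → i^n = -1 := by
    intro n hn
    conv_lhs => rw [← Nat.div_add_mod n 4]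
    rw [pow_add, pow_mul, hi4, one_pow, hn, hi2, one_mul]
  have hmod : ∀ t : ℕ, (p ^ t + 1) % 4 = 2 := by
    intro t
    have : p ^ t % 4 = 1 := by simp [Nat.pow_mod, hp4]
    omega
  have hiff : ∀ x y : F, x^2 + y^2 = 0 ↔ (x = i*y ∨ x = -(i*y)) := by
    intro x y
    constructor
    · intro h
      have hfac : (x - i*y) * (x + i*y) = 0 := by
        have he : (x - i*y)*(x+i*y) = x^2 - i^2 * y^2 := by ring
        rw [he, hi2]
        linear_combination h
      rcases mul_eq_zero.mp hfac with h1 | h1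
      · exact Or.inl (by linear_combination h1)
      · exact Or.inr (by linear_combination h1)
    · rintro (rfl | rfl)
      · linear_combination (y^2) * hi2
      · linear_combination (y^2) * hi2
  have hcond : ∀ x y : F, x^2+y^2 = 0 → (x^a1 + y^a1 = 0 ∧ x^a2 + y^a2 = 0) := by
    intro x y h
    have hpow : ∀ n : ℕ, n % 4 = 2 → x^n + y^n = 0 := by
      intro n hn
      have heven : Even n := by
        rcases Nat.even_or_odd n with he | ho
        · exact he
        · exfalso; rcases ho with ⟨c, hc⟩; omega
      rcases (hiff x y).mp h with rfl | rfl
      · rw [mul_pow, hipow n hn]; ring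
      · rw [neg_pow, mul_pow, hipow n hn, heven.neg_one_pow]; ring
    exact ⟨hpow a1 (hmod (2*k)), hpow a2 (hmod k)⟩
  -- main computation
  have hbig : (∑ α : F, ∑ β : F, ∑ γ : F, (expSumT p k F α β γ)^2)
      = ∑ x : F, ∑ y : F, ∑ α : F, ∑ β : F, ∑ γ : F,
          ψ (α * (x^a1 + y^a1)) * ψ (β * (x^a2 + y^a2)) * ψ (γ * (x^2 + y^2)) := by
    calc (∑ α : F, ∑ β : F, ∑ γ : F, (expSumT p k F α β γ)^2)
        = ∑ α : F, ∑ β : F, ∑ γ : F, ∑ x : F, ∑ y : F,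
            ψ (α * (x^a1 + y^a1)) * ψ (β * (x^a2 + y^a2)) * ψ (γ * (x^2 + y^2)) :=
          Finset.sum_congr rfl fun α _ => Finset.sum_congr rfl fun β _ =>
            Finset.sum_congr rfl fun γ _ => hsq α β γ
      _ = ∑ α : F, ∑ β : F, ∑ x : F, ∑ y : F, ∑ γ : F,
            ψ (α * (x^a1 + y^a1)) * ψ (β * (x^a2 + y^a2)) * ψ (γ * (x^2 + y^2)) :=
          Finset.sum_congr rfl fun α _ => Finset.sum_congr rfl fun β _ => sum_comm3 _
      _ = ∑ α : F, ∑ x : F, ∑ y : F, ∑ β : F, ∑ γ : F,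
            ψ (α * (x^a1 + y^a1)) * ψ (β * (x^a2 + y^a2)) * ψ (γ * (x^2 + y^2)) :=
          Finset.sum_congr rfl fun α _ => sum_comm3 _
      _ = ∑ x : F, ∑ y : F, ∑ α : F, ∑ β : F, ∑ γ : F,
            ψ (α * (x^a1 + y^a1)) * ψ (β * (x^a2 + y^a2)) * ψ (γ * (x^2 + y^2)) :=
          sum_comm3 _
  rw [hbig]
  have hprod : ∀ x y : F, (∑ α : F, ∑ β : F, ∑ γ : F,
        ψ (α * (x^a1 + y^a1)) * ψ (β * (x^a2 + y^a2)) * ψ (γ * (x^2 + y^2)))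
      = (if x^2+y^2 = 0 then q^3 else 0) := by
    intro x y
    have e1 : ∀ α β : F, ∑ γ : F, ψ (α * (x^a1 + y^a1)) * ψ (β * (x^a2 + y^a2)) * ψ (γ * (x^2 + y^2))
        = ψ (α * (x^a1 + y^a1)) * ψ (β * (x^a2 + y^a2)) * ∑ γ : F, ψ (γ * (x^2 + y^2)) := by
      intro α β; rw [Finset.mul_sum]
    have e2 : ∀ α : F, ∑ β : F, ψ (α * (x^a1 + y^a1)) * ψ (β * (x^a2 + y^a2))
        = ψ (α * (x^a1 + y^a1)) * ∑ β : F, ψ (β * (x^a2 + y^a2)) := by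
      intro α; rw [Finset.mul_sum]
    calc (∑ α : F, ∑ β : F, ∑ γ : F,
        ψ (α * (x^a1 + y^a1)) * ψ (β * (x^a2 + y^a2)) * ψ (γ * (x^2 + y^2)))
        = (∑ α : F, ψ (α * (x^a1 + y^a1))) * (∑ β : F, ψ (β * (x^a2 + y^a2)))
            * (∑ γ : F, ψ (γ * (x^2 + y^2))) := by
          simp_rw [e1, ← Finset.sum_mul, e2]
          rw [← Finset.sum_mul]
      _ = (if x^a1+y^a1 = 0 then q else 0) * (if x^a2+y^a2 = 0 then q else 0)
            * (if x^2+y^2 = 0 then q else 0) := by rw [hS, hS, hS]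
      _ = (if x^2+y^2 = 0 then q^3 else 0) := by
          by_cases h : x^2+y^2 = 0
          · obtain ⟨h1, h2⟩ := hcond x y h
            rw [if_pos h, if_pos h1, if_pos h2, if_pos h]; ring
          · rw [if_neg h, if_neg h, mul_zero]
  simp_rw [hprod]
  -- counting
  have h2ne : (2:F) ≠ 0 := by
    have := hcharF
    intro h
    have hdvd : (p:ℕ) ∣ 2 := by
      have h2 : ((2:ℕ):F) = 0 := by exact_mod_cast h
      exact (CharP.cast_eq_zero_iff F p 2).mp h2
    have hle := Nat.le_of_dvd two_pos hdvd
    have h2le := hp.two_le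
    omega
  have hi0 : i ≠ 0 := by
    intro h0
    have h1 : (1:F) = 0 := by linear_combination hi2 - i * h0
    exact one_ne_zero h1
  have hcount : ∀ x : F, (∑ y : F, if x^2+y^2 = 0 then (q^3:ℂ) else 0)
      = if x = 0 then q^3 else 2*q^3 := by
    intro x
    have hsym : ∀ y : F, (x^2+y^2 = 0) ↔ (y = i*x ∨ y = -(i*x)) := by
      intro y
      rw [add_comm]
      exact hiff y x
    simp_rw [hsym]
    by_cases hx : x = 0
    · subst hx
      rw [if_pos rfl]
      have hsimp : ∀ y : F, ((y = i*0 ∨ y = -(i*0)) ↔ y = 0) := by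
        intro y; simp
      simp_rw [hsimp]
      rw [Finset.sum_ite_eq' Finset.univ (0:F) (fun _ => q^3), if_pos (Finset.mem_univ _)]
    · rw [if_neg hx]
      have hne : i*x ≠ -(i*x) := by
        intro h
        have h2x : (2:F) * (i*x) = 0 := by linear_combination h
        rcases mul_eq_zero.mp h2x with h' | h'
        · exact h2ne h'
        · rcases mul_eq_zero.mp h' with h'' | h''
          · exact hi0 h''
          · exact hx h''
      have hsplit : ∀ y : F, (if (y = i*x ∨ y = -(i*x)) then (q^3:ℂ) else 0)
          = (if y = i*x then q^3 else 0) + (if y = -(i*x) then q^3 else 0) := by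
        intro y
        by_cases h1 : y = i*x
        · subst h1
          rw [if_pos (Or.inl rfl), if_pos rfl, if_neg hne, add_zero]
        · by_cases h2 : y = -(i*x)
          · subst h2
            rw [if_pos (Or.inr rfl), if_neg h1, if_pos rfl, zero_add]
          · rw [if_neg (by tauto), if_neg h1, if_neg h2, add_zero]
      simp_rw [hsplit]
      rw [Finset.sum_add_distrib,
        Finset.sum_ite_eq' Finset.univ (i*x) (fun _ => (q^3:ℂ)),
        Finset.sum_ite_eq' Finset.univ (-(i*x)) (fun _ => (q^3:ℂ)),
        if_pos (Finset.mem_univ _), if_pos (Finset.mem_univ _)]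
      ring
  simp_rw [hcount]
  -- final sum over x
  have hfin : ∀ x : F, (if x = 0 then (q^3:ℂ) else 2*q^3)
      = 2*q^3 + (if x = 0 then q^3 - 2*q^3 else 0) := by
    intro x
    by_cases h : x = 0 <;> simp [h] <;> ring
  simp_rw [hfin]
  rw [Finset.sum_add_distrib, Finset.sum_const, Finset.card_univ, hF,
    Finset.sum_ite_eq' Finset.univ (0:F) (fun _ => (q^3:ℂ) - 2*q^3),
    if_pos (Finset.mem_univ _)]
  have hcast : ((p^m : ℕ) : ℂ) = q := by push_cast [hq]; ring
  rw [nsmul_eq_mul, hcast]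
  have hq3 : (p:ℂ)^(3*m) = q^3 := by
    rw [hq, ← pow_mul, mul_comm]
  rw [hq3]
  ring
end

section
/- Suppose p ≡ 3 (mod 4). Then the number N₄ of quadruples (x₁,x₂,x₃,x₄) ∈ F⁴ satisfying x₁² + x₂² + x₃² + x₄² = 0, x₁^{p^k+1} + x₂^{p^k+1} + x₃^{p^k+1} + x₄^{p^k+1} = 0, and x₁^{p^{2k}+1} + x₂^{p^{2k}+1} + x₃^{p^{2k}+1} + x₄^{p^{2k}+1} = 0 equals (p+1)(p^m − 1)(2p^m − p + 1) + 1. -/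
namespace N4

variable {E : Type*} [Field E]

/-- determinant of quadruple viewed as 2x2 matrix (X11,X12,X21,X22) -/
def det4 (X : E × E × E × E) : E := X.1 * X.2.2.2 - X.2.1 * X.2.2.1

/-- outer product of two 2-vectors -/
def outer (c r : E × E) : E × E × E × E :=
  (c.1 * r.1, c.1 * r.2, c.2 * r.1, c.2 * r.2)

lemma det4_outer (c r : E × E) : det4 (outer c r) = 0 := by
  simp only [det4, outer]; ring

lemma det4_outer_add (c r c' r' : E × E) :
    det4 (outer c r + outer c' r') =
      (c.1 * c'.2 - c.2 * c'.1) * (r.1 * r'.2 - r.2 * r'.1) := by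
  simp only [det4, outer, Prod.fst_add, Prod.snd_add]; ring

lemma outer_eq_zero_iff {c r : E × E} : outer c r = 0 ↔ c = 0 ∨ r = 0 := by
  obtain ⟨c1, c2⟩ := c; obtain ⟨r1, r2⟩ := r
  simp only [outer, Prod.ext_iff, Prod.mk.injEq, Prod.fst_zero, Prod.snd_zero, mul_eq_zero]
  constructor
  · rintro ⟨h1, h2, h3, h4⟩; tauto
  · rintro (⟨h1, h2⟩ | ⟨h1, h2⟩) <;> tauto

lemma outer00 {E : Type*} [Field E] : outer ((0 : E), (0 : E)) ((0 : E), (0 : E)) = 0 := by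
  simp [outer, Prod.ext_iff]

lemma exists_outer (X : E × E × E × E) (h : det4 X = 0) : ∃ c r, X = outer c r := by
  obtain ⟨x1, x2, x3, x4⟩ := X
  simp only [det4] at h
  rw [sub_eq_zero] at h
  rcases eq_or_ne x1 0 with h1 | h1
  · rcases eq_or_ne x2 0 with h2 | h2
    · exact ⟨(0, 1), (x3, x4), by simp [outer, h1, h2]⟩
    · have h3 : x3 = 0 := by
        have hx : x2 * x3 = 0 := by rw [← h, h1, zero_mul]
        rcases mul_eq_zero.1 hx with h' | h'
        · exact absurd h' h2
        · exact h'
      subst h1; subst h3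
      refine ⟨(1, x4 / x2), (0, x2), ?_⟩
      simp only [outer, Prod.mk.injEq]
      refine ⟨by ring, by ring, by ring, by field_simp⟩
  · refine ⟨(x1, x3), (1, x2 / x1), ?_⟩
    simp only [outer, Prod.mk.injEq]
    refine ⟨by ring, by field_simp, by ring, ?_⟩
    field_simp
    first
    | linear_combination h
    | linear_combination -h
    | linear_combination 2 * h
    | linear_combination -2 * h
    | linear_combination x1 * h
    | ring

def map4 (σ : E → E) (X : E × E × E × E) : E × E × E × E :=
  (σ X.1, σ X.2.1, σ X.2.2.1, σ X.2.2.2)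

def qsum (x : E × E × E × E) : E := x.1 ^ 2 + x.2.1 ^ 2 + x.2.2.1 ^ 2 + x.2.2.2 ^ 2

def dotp (x y : E × E × E × E) : E := x.1 * y.1 + x.2.1 * y.2.1 + x.2.2.1 * y.2.2.1 + x.2.2.2 * y.2.2.2

def Mmap (a b : E) (x : E × E × E × E) : E × E × E × E :=
  (x.1 + a * x.2.2.1 + b * x.2.2.2,
   x.2.1 - b * x.2.2.1 + a * x.2.2.2,
   -(x.2.1 + b * x.2.2.1 - a * x.2.2.2),
   x.1 - a * x.2.2.1 - b * x.2.2.2)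

lemma Mmap_add (a b : E) (x y : E × E × E × E) :
    Mmap a b x + Mmap a b y = Mmap a b (x + y) := by
  simp only [Mmap, Prod.mk_add_mk, Prod.fst_add, Prod.snd_add, Prod.mk.injEq]
  refine ⟨by ring, by ring, by ring, by ring⟩

lemma det4_Mmap {a b : E} (hab : a ^ 2 + b ^ 2 = -1) (x : E × E × E × E) :
    det4 (Mmap a b x) = qsum x := by
  simp only [det4, Mmap, qsum]
  linear_combination (-(x.2.2.1 ^ 2) - x.2.2.2 ^ 2) * hab

lemma Mmap_inj {a b : E} (hab : a ^ 2 + b ^ 2 = -1) (h2 : (2 : E) ≠ 0) :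
    Function.Injective (Mmap a b) := by
  intro x y hxy
  obtain ⟨x1, x2, x3, x4⟩ := x; obtain ⟨y1, y2, y3, y4⟩ := y
  simp only [Mmap, Prod.mk.injEq] at hxy
  obtain ⟨e1, e2, e3, e4⟩ := hxy
  have hz1 : 2 * (x1 - y1) = 0 := by linear_combination e1 + e4
  have hz2 : 2 * (x2 - y2) = 0 := by linear_combination e2 - e3
  have hz3 : 2 * (x3 - y3) = 0 := by
    linear_combination (-a) * e1 + b * e2 + b * e3 + a * e4 + (2 * (x3 - y3)) * hab
  have hz4 : 2 * (x4 - y4) = 0 := by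
    linear_combination (-b) * e1 - a * e2 - a * e3 + b * e4 + (2 * (x4 - y4)) * hab
  have f : ∀ u v : E, 2 * (u - v) = 0 → u = v := by
    intro u v huv
    rcases mul_eq_zero.1 huv with h' | h'
    · exact absurd h' h2
    · exact sub_eq_zero.1 h'
  simp only [Prod.mk.injEq]
  exact ⟨f _ _ hz1, f _ _ hz2, f _ _ hz3, f _ _ hz4⟩

lemma qsum_add (x y : E × E × E × E) :
    qsum (x + y) = qsum x + 2 * dotp x y + qsum y := by
  simp only [qsum, dotp, Prod.fst_add, Prod.snd_add]; ring

def trp (X : E × E × E × E) : E × E × E × E := (X.1, X.2.2.1, X.2.1, X.2.2.2)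

lemma trp_outer (c r : E × E) : trp (outer c r) = outer r c := by
  simp only [trp, outer, Prod.mk.injEq]
  refine ⟨by ring, by ring, by ring, by ring⟩

lemma trp_invol : Function.Involutive (trp (E := E)) := fun X => rfl

/-- normalized vector representative -/
def nv (s : E ⊕ Unit) : E × E := Sum.elim (fun t => (1, t)) (fun _ => ((0 : E), (1 : E))) s

lemma nv_ne_zero (s : E ⊕ Unit) : nv s ≠ 0 := by
  cases s with
  | inl t => simp [nv, Prod.ext_iff]
  | inr u => simp [nv, Prod.ext_iff]

lemma outer_nv_inj {s s' : E ⊕ Unit} {r r' : E × E} (hr : r ≠ 0)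
    (h : outer (nv s) r = outer (nv s') r') : s = s' ∧ r = r' := by
  obtain ⟨r1, r2⟩ := r; obtain ⟨r1', r2'⟩ := r'
  cases s with
  | inl t =>
    cases s' with
    | inl t' =>
      simp only [nv, Sum.elim_inl, outer, Prod.mk.injEq, one_mul] at h
      obtain ⟨e1, e2, e3, e4⟩ := h
      subst e1; subst e2
      have ht : t = t' := by
        rcases (by simpa [Prod.ext_iff] using hr : ¬(r1 = 0 ∧ r2 = 0)) with -
        by_cases h1 : r1 = 0
        · have h2 : r2 ≠ 0 := by
            intro h2; exact hr (by simp [Prod.ext_iff, h1, h2])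
          exact mul_right_cancel₀ h2 e4
        · exact mul_right_cancel₀ h1 e3
      exact ⟨by rw [ht], rfl⟩
    | inr u =>
      simp only [nv, Sum.elim_inl, Sum.elim_inr, outer, Prod.mk.injEq, one_mul, zero_mul] at h
      exact absurd (by simp [Prod.ext_iff, h.1, h.2.1]) hr
  | inr u =>
    cases s' with
    | inl t' =>
      simp only [nv, Sum.elim_inl, Sum.elim_inr, outer, Prod.mk.injEq, one_mul, zero_mul] at h
      obtain ⟨e1, e2, e3, e4⟩ := h
      refine absurd ?_ hr
      simp [Prod.ext_iff, e3, e4, ← e1, ← e2]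
    | inr u' =>
      simp only [nv, Sum.elim_inr, outer, Prod.mk.injEq, one_mul, zero_mul] at h
      exact ⟨rfl, by simp [Prod.ext_iff, h.2.2]⟩


lemma map4_Mmap (σ : E → E)
    (σadd : ∀ s t : E, σ (s + t) = σ s + σ t)
    (σmul : ∀ s t : E, σ (s * t) = σ s * σ t)
    {a b : E} (σa : σ a = a) (σb : σ b = b) (x : E × E × E × E) :
    map4 σ (Mmap a b x) = Mmap a b (map4 σ x) := by
  have σ0 : σ 0 = 0 := by
    have h := σadd 0 0
    rw [add_zero] at h
    exact (left_eq_add.1 h)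
  have σneg : ∀ t : E, σ (-t) = -σ t := by
    intro t
    have h := σadd t (-t)
    rw [add_neg_cancel, σ0] at h
    exact eq_neg_of_add_eq_zero_right h.symm
  have σsub : ∀ s t : E, σ (s - t) = σ s - σ t := by
    intro s t
    rw [sub_eq_add_neg, σadd, σneg, sub_eq_add_neg]
  simp only [map4, Mmap, Prod.mk.injEq]
  refine ⟨?_, ?_, ?_, ?_⟩
  · rw [σadd, σadd, σmul, σmul, σa, σb]
  · rw [σadd, σsub, σmul, σmul, σa, σb]
  · rw [σneg, σsub, σadd, σmul, σmul, σa, σb]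
  · rw [σsub, σsub, σmul, σmul, σa, σb]

variable (p : ℕ)

def Colset (F : Type*) [Field F] : Set (F × F × F × F) :=
  {Y | ∃ c r : F × F, c.1 ^ p = c.1 ∧ c.2 ^ p = c.2 ∧ Y = outer c r}

def Rowset (F : Type*) [Field F] : Set (F × F × F × F) :=
  {Y | ∃ c r : F × F, r.1 ^ p = r.1 ∧ r.2 ^ p = r.2 ∧ Y = outer c r}

lemma map4_outer (σ : E → E) (σmul : ∀ s t, σ (s * t) = σ s * σ t) (c r : E × E) :
    map4 σ (outer c r) = outer (σ c.1, σ c.2) (σ r.1, σ r.2) := by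
  simp only [map4, outer, Prod.mk.injEq]
  exact ⟨σmul _ _, σmul _ _, σmul _ _, σmul _ _⟩

lemma sol_iff {F : Type*} [Field F] (hp0 : p ≠ 0) (σ : F → F)
    (σmul : ∀ s t, σ (s * t) = σ s * σ t)
    (σne : ∀ t : F, t ≠ 0 → σ t ≠ 0)
    (σdiv : ∀ s t : F, σ (s / t) = σ s / σ t)
    (fixiff : ∀ e : F, σ e = e ↔ e ^ p = e)
    (Y : F × F × F × F) :
    (det4 Y = 0 ∧ det4 (Y + map4 σ Y) = 0 ∧ det4 (Y + map4 σ (map4 σ Y)) = 0)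
      ↔ Y ∈ Colset p F ∪ Rowset p F := by
  constructor
  · rintro ⟨h1, h2, -⟩
    rcases eq_or_ne Y 0 with hY | hY
    · left
      exact ⟨(0, 0), (0, 0), by simp [zero_pow hp0], by simp [zero_pow hp0],
        by rw [hY, outer00]⟩
    · obtain ⟨c, r, rfl⟩ := exists_outer Y h1
      have hc : c ≠ 0 := by
        intro h; exact hY (outer_eq_zero_iff.2 (Or.inl h))
      have hr : r ≠ 0 := by
        intro h; exact hY (outer_eq_zero_iff.2 (Or.inr h))
      rw [map4_outer σ σmul, det4_outer_add] at h2
      rcases mul_eq_zero.1 h2 with hcr | hcr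
      · -- column directions proportional
        left
        rcases eq_or_ne c.1 0 with hc1 | hc1
        · refine ⟨(0, 1), (c.2 * r.1, c.2 * r.2), by simp [zero_pow hp0], one_pow p, ?_⟩
          simp only [outer, Prod.mk.injEq, hc1]
          refine ⟨by ring, by ring, by ring, by ring⟩
        · have he : σ (c.2 / c.1) = c.2 / c.1 := by
            rw [σdiv]
            rw [div_eq_div_iff (σne c.1 hc1) hc1]
            linear_combination hcr
          refine ⟨(1, c.2 / c.1), (c.1 * r.1, c.1 * r.2), one_pow p,
            (fixiff _).1 he, ?_⟩
          simp only [outer, Prod.mk.injEq]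
          refine ⟨by ring, by ring, by field_simp, by field_simp⟩
      · -- row directions proportional
        right
        rcases eq_or_ne r.1 0 with hr1 | hr1
        · refine ⟨(c.1 * r.2, c.2 * r.2), (0, 1), by simp [zero_pow hp0], one_pow p, ?_⟩
          simp only [outer, Prod.mk.injEq, hr1]
          refine ⟨by ring, by ring, by ring, by ring⟩
        · have he : σ (r.2 / r.1) = r.2 / r.1 := by
            rw [σdiv]
            rw [div_eq_div_iff (σne r.1 hr1) hr1]
            linear_combination hcr
          refine ⟨(c.1 * r.1, c.2 * r.1), (1, r.2 / r.1), one_pow p,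
            (fixiff _).1 he, ?_⟩
          simp only [outer, Prod.mk.injEq]
          refine ⟨by ring, by field_simp, by ring, by field_simp⟩
  · rintro (⟨c, r, hc1, hc2, rfl⟩ | ⟨c, r, hr1, hr2, rfl⟩)
    · have hfc1 : σ c.1 = c.1 := (fixiff _).2 hc1
      have hfc2 : σ c.2 = c.2 := (fixiff _).2 hc2
      refine ⟨det4_outer c r, ?_, ?_⟩
      · rw [map4_outer σ σmul, det4_outer_add, hfc1, hfc2]
        ring
      · rw [map4_outer σ σmul, map4_outer σ σmul, det4_outer_add]
        simp only [hfc1, hfc2]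
        ring
    · have hfr1 : σ r.1 = r.1 := (fixiff _).2 hr1
      have hfr2 : σ r.2 = r.2 := (fixiff _).2 hr2
      refine ⟨det4_outer c r, ?_, ?_⟩
      · rw [map4_outer σ σmul, det4_outer_add, hfr1, hfr2]
        ring
      · rw [map4_outer σ σmul, map4_outer σ σmul, det4_outer_add]
        simp only [hfr1, hfr2]
        ring

abbrev NEt (F : Type*) [Field F] := {e : F // e ^ p = e} ⊕ Unit

def nvP {F : Type*} [Field F] (s : NEt p F) : F × F := nv (Sum.map Subtype.val id s)

lemma nvP_fix {F : Type*} [Field F] (hp0 : p ≠ 0) (s : NEt p F) :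
    (nvP p s).1 ^ p = (nvP p s).1 ∧ (nvP p s).2 ^ p = (nvP p s).2 := by
  cases s with
  | inl e => exact ⟨one_pow p, e.2⟩
  | inr u => exact ⟨zero_pow hp0, one_pow p⟩

lemma nvP_ne_zero {F : Type*} [Field F] (s : NEt p F) : nvP p s ≠ 0 :=
  nv_ne_zero _

lemma nvP_inj {F : Type*} [Field F] {s s' : NEt p F}
    (h : nvP p s = nvP p s') : s = s' := by
  cases s with
  | inl e =>
    cases s' with
    | inl e' =>
      simp only [nvP, nv, Sum.map_inl, id, Sum.elim_inl, Prod.mk.injEq] at h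
      exact congrArg Sum.inl (Subtype.ext h.2)
    | inr u => simp [nvP, nv, Prod.ext_iff] at h
  | inr u =>
    cases s' with
    | inl e' => simp [nvP, nv, Prod.ext_iff] at h
    | inr u' => rfl

def colF (F : Type*) [Field F] (z : NEt p F × {r : F × F // r ≠ 0}) :
    F × F × F × F := outer (nvP p z.1) z.2.val

lemma summap_inj {F : Type*} [Field F] {s s' : NEt p F}
    (h : Sum.map (Subtype.val) (id : Unit → Unit) s = Sum.map Subtype.val id s') :
    s = s' := by
  cases s with
  | inl e =>
    cases s' with
    | inl e' =>
      simp only [Sum.map_inl, Sum.inl.injEq] at h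
      exact congrArg Sum.inl (Subtype.ext h)
    | inr u => simp at h
  | inr u =>
    cases s' with
    | inl e' => simp at h
    | inr u' => rfl

lemma colF_inj (F : Type*) [Field F] : Function.Injective (colF p F) := by
  rintro ⟨s, r⟩ ⟨s', r'⟩ h
  simp only [colF, nvP] at h
  obtain ⟨h1, h2⟩ := outer_nv_inj r.2 h
  exact Prod.ext_iff.2 ⟨summap_inj p h1, Subtype.ext h2⟩

lemma colF_ne_zero (F : Type*) [Field F] (z) : colF p F z ≠ 0 := by
  intro h
  rcases outer_eq_zero_iff.1 h with h' | h'
  · exact nvP_ne_zero p _ h'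
  · exact z.2.2 h'

lemma colset_eq (F : Type*) [Field F] (hp0 : p ≠ 0) :
    Colset p F = insert 0 (Set.range (colF p F)) := by
  ext Y
  simp only [Set.mem_insert_iff, Set.mem_range]
  constructor
  · rintro ⟨c, r, hc1, hc2, rfl⟩
    rcases eq_or_ne (outer c r) 0 with h0 | h0
    · exact Or.inl h0
    · right
      have hc : c ≠ 0 := fun h => h0 (outer_eq_zero_iff.2 (Or.inl h))
      have hr : r ≠ 0 := fun h => h0 (outer_eq_zero_iff.2 (Or.inr h))
      rcases eq_or_ne c.1 0 with h1 | h1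
      · have hc2' : c.2 ≠ 0 := by
          intro h; exact hc (Prod.ext_iff.2 ⟨h1, h⟩)
        refine ⟨(Sum.inr (), ⟨(c.2 * r.1, c.2 * r.2), ?_⟩), ?_⟩
        · intro h
          simp only [Prod.mk.injEq, Prod.ext_iff, Prod.fst_zero, Prod.snd_zero] at h
          exact hr (Prod.ext_iff.2 ⟨(by rcases mul_eq_zero.1 h.1 with h'|h'; exact absurd h' hc2'; exact h'),
            (by rcases mul_eq_zero.1 h.2 with h'|h'; exact absurd h' hc2'; exact h')⟩)
        · simp only [colF, nvP, nv, Sum.map_inr, id, Sum.elim_inr, outer, Prod.mk.injEq, h1]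
          refine ⟨by ring, by ring, by ring, by ring⟩
      · refine ⟨(Sum.inl ⟨c.2 / c.1, by rw [div_pow, hc1, hc2]⟩,
          ⟨(c.1 * r.1, c.1 * r.2), ?_⟩), ?_⟩
        · intro h
          simp only [Prod.mk.injEq, Prod.ext_iff, Prod.fst_zero, Prod.snd_zero] at h
          exact hr (Prod.ext_iff.2 ⟨(by rcases mul_eq_zero.1 h.1 with h'|h'; exact absurd h' h1; exact h'),
            (by rcases mul_eq_zero.1 h.2 with h'|h'; exact absurd h' h1; exact h')⟩)
        · simp only [colF, nvP, nv, Sum.map_inl, id, Sum.elim_inl, outer, Prod.mk.injEq]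
          refine ⟨by ring, by ring, by field_simp, by field_simp⟩
  · rintro (rfl | ⟨z, rfl⟩)
    · exact ⟨(0, 0), (0, 0), by simp [zero_pow hp0], by simp [zero_pow hp0],
        by rw [outer00]⟩
    · exact ⟨nvP p z.1, z.2.val, (nvP_fix p hp0 z.1).1, (nvP_fix p hp0 z.1).2, rfl⟩

lemma rowset_eq (F : Type*) [Field F] : Rowset p F = trp '' Colset p F := by
  ext Y
  simp only [Set.mem_image]
  constructor
  · rintro ⟨c, r, hr1, hr2, rfl⟩
    exact ⟨outer r c, ⟨r, c, hr1, hr2, rfl⟩, by rw [trp_outer]⟩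
  · rintro ⟨Z, ⟨c, r, hc1, hc2, rfl⟩, rfl⟩
    exact ⟨r, c, hc1, hc2, by rw [trp_outer]⟩

def interF (F : Type*) [Field F]
    (z : NEt p F × NEt p F × {s : F // s ≠ 0}) : F × F × F × F :=
  outer (nvP p z.1) (z.2.2.val * (nvP p z.2.1).1, z.2.2.val * (nvP p z.2.1).2)

lemma scaled_nv_ne_zero {F : Type*} [Field F] {w : F} (hw : w ≠ 0) (t : NEt p F) :
    (w * (nvP p t).1, w * (nvP p t).2) ≠ (0 : F × F) := by
  intro h0
  have h1 : w * (nvP p t).1 = 0 := congrArg Prod.fst h0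
  have h2 : w * (nvP p t).2 = 0 := congrArg Prod.snd h0
  apply nvP_ne_zero p t
  exact Prod.ext_iff.2 ⟨(mul_eq_zero.1 h1).resolve_left hw,
    (mul_eq_zero.1 h2).resolve_left hw⟩

lemma interF_ne_zero (F : Type*) [Field F] (z) : interF p F z ≠ 0 := by
  intro h
  rcases outer_eq_zero_iff.1 h with h' | h'
  · exact nvP_ne_zero p _ h'
  · exact scaled_nv_ne_zero p z.2.2.2 z.2.1 h'

lemma interF_inj (F : Type*) [Field F] : Function.Injective (interF p F) := by
  rintro ⟨s, t, w⟩ ⟨s', t', w'⟩ h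
  simp only [interF, nvP] at h
  have hrz : (w.val * (nvP p t).1, w.val * (nvP p t).2) ≠ (0 : F × F) :=
    scaled_nv_ne_zero p w.2 t
  obtain ⟨h1, h2⟩ := outer_nv_inj hrz h
  have hs : s = s' := summap_inj p h1
  rw [Prod.ext_iff] at h2
  simp only at h2
  -- now compare scaled normalized vectors
  have htw : t = t' ∧ w = w' := by
    cases t with
    | inl e =>
      cases t' with
      | inl e' =>
        simp only [nvP, nv, Sum.map_inl, id, Sum.elim_inl, mul_one] at h2
        have hw : w.val = w'.val := h2.1
        have he : e.val = e'.val := by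
          have := h2.2
          rw [hw] at this
          exact mul_left_cancel₀ w'.2 this
        exact ⟨congrArg Sum.inl (Subtype.ext he), Subtype.ext hw⟩
      | inr u =>
        simp only [nvP, nv, Sum.map_inl, Sum.map_inr, id, Sum.elim_inl, Sum.elim_inr,
          mul_one, mul_zero] at h2
        exact absurd h2.1 w.2
    | inr u =>
      cases t' with
      | inl e' =>
        simp only [nvP, nv, Sum.map_inl, Sum.map_inr, id, Sum.elim_inl, Sum.elim_inr,
          mul_one, mul_zero] at h2
        exact absurd h2.1.symm w'.2
      | inr u' =>
        simp only [nvP, nv, Sum.map_inr, id, Sum.elim_inr, mul_one, mul_zero] at h2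
        exact ⟨rfl, Subtype.ext h2.2⟩
  exact Prod.ext_iff.2 ⟨hs, Prod.ext_iff.2 ⟨htw.1, htw.2⟩⟩

lemma interset_eq (F : Type*) [Field F] (hp0 : p ≠ 0) :
    Colset p F ∩ Rowset p F = insert 0 (Set.range (interF p F)) := by
  ext Y
  simp only [Set.mem_insert_iff, Set.mem_range, Set.mem_inter_iff]
  constructor
  · rintro ⟨hcol, hrow⟩
    rcases eq_or_ne Y 0 with h0 | h0
    · exact Or.inl h0
    · right
      -- Y ∈ Colset \ 0 : normalized column form
      have hcol' := (colset_eq p F hp0) ▸ hcol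
      rcases (by simpa only [Set.mem_insert_iff, Set.mem_range] using hcol' :
          Y = 0 ∨ ∃ z, colF p F z = Y) with h | ⟨⟨cN, r⟩, hzY⟩
      · exact absurd h h0
      -- Y ∈ Rowset \ 0 : Y = trp Z with Z ∈ Colset \ 0
      rw [rowset_eq] at hrow
      obtain ⟨Z, hZcol, hZY⟩ := hrow
      have hZ0 : Z ≠ 0 := by
        intro h; rw [h] at hZY
        exact h0 (by rw [← hZY]; rfl)
      have hZcol' := (colset_eq p F hp0) ▸ hZcol
      rcases (by simpa only [Set.mem_insert_iff, Set.mem_range] using hZcol' :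
          Z = 0 ∨ ∃ z, colF p F z = Z) with h | ⟨⟨rN, cv⟩, hzZ⟩
      · exact absurd h hZ0
      -- Y = outer (nvP cN) r = outer cv (nvP rN)
      have hY1 : Y = outer (nvP p cN) r.val := by rw [← hzY]; rfl
      have hY2 : Y = outer cv.val (nvP p rN) := by
        rw [← hZY, ← hzZ]
        simp only [colF]
        rw [trp_outer]
      have heq : outer (nvP p cN) r.val = outer cv.val (nvP p rN) := by
        rw [← hY1, hY2]
      cases cN with
      | inl e =>
        have h11 := congrArg Prod.fst heq
        have h12 := congrArg (fun X : F × F × F × F => X.2.1) heq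
        simp only [outer, nvP, nv, Sum.map_inl, id, Sum.elim_inl, one_mul] at h11 h12
        have hs : cv.val.1 ≠ 0 := by
          intro hcv
          apply r.2
          rw [Prod.ext_iff]
          simp only [Prod.fst_zero, Prod.snd_zero]
          exact ⟨by rw [h11, hcv, zero_mul], by rw [h12, hcv, zero_mul]⟩
        refine ⟨(Sum.inl e, rN, ⟨cv.val.1, hs⟩), ?_⟩
        rw [hY1]
        simp only [interF, nvP, nv, Sum.map_inl, id, Sum.elim_inl]
        rw [← h11, ← h12]
      | inr u =>
        have h21 := congrArg (fun X : F × F × F × F => X.2.2.1) heq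
        have h22 := congrArg (fun X : F × F × F × F => X.2.2.2) heq
        simp only [outer, nvP, nv, Sum.map_inr, id, Sum.elim_inr, one_mul] at h21 h22
        have hs : cv.val.2 ≠ 0 := by
          intro hcv
          apply r.2
          rw [Prod.ext_iff]
          simp only [Prod.fst_zero, Prod.snd_zero]
          exact ⟨by rw [h21, hcv, zero_mul], by rw [h22, hcv, zero_mul]⟩
        refine ⟨(Sum.inr u, rN, ⟨cv.val.2, hs⟩), ?_⟩
        rw [hY1]
        simp only [interF, nvP, nv, Sum.map_inr, id, Sum.elim_inr]
        rw [← h21, ← h22]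
  · rintro (rfl | ⟨z, rfl⟩)
    · constructor
      · exact ⟨(0, 0), (0, 0), by simp [zero_pow hp0], by simp [zero_pow hp0],
          by rw [outer00]⟩
      · exact ⟨(0, 0), (0, 0), by simp [zero_pow hp0], by simp [zero_pow hp0],
          by rw [outer00]⟩
    · constructor
      · exact ⟨nvP p z.1, _, (nvP_fix p hp0 z.1).1, (nvP_fix p hp0 z.1).2, rfl⟩
      · refine ⟨(z.2.2.val * (nvP p z.1).1, z.2.2.val * (nvP p z.1).2), nvP p z.2.1,
          (nvP_fix p hp0 z.2.1).1, (nvP_fix p hp0 z.2.1).2, ?_⟩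
        simp only [interF, outer, Prod.mk.injEq]
        refine ⟨by ring, by ring, by ring, by ring⟩

end N4

open N4 in
theorem N4_count (p m k : ℕ) (hp : p.Prime) (hp4 : p % 4 = 3)
    (hm : Odd m) (hm5 : 5 ≤ m) (hk : 0 < k) (hgcd : Nat.gcd m k = 1)
    (F : Type*) [Field F] [Fintype F] (hF : Fintype.card F = p ^ m) :
    (Nat.card {x : F × F × F × F //
        x.1 ^ 2 + x.2.1 ^ 2 + x.2.2.1 ^ 2 + x.2.2.2 ^ 2 = 0 ∧
        x.1 ^ (p ^ k + 1) + x.2.1 ^ (p ^ k + 1) + x.2.2.1 ^ (p ^ k + 1)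
          + x.2.2.2 ^ (p ^ k + 1) = 0 ∧
        x.1 ^ (p ^ (2 * k) + 1) + x.2.1 ^ (p ^ (2 * k) + 1) + x.2.2.1 ^ (p ^ (2 * k) + 1)
          + x.2.2.2 ^ (p ^ (2 * k) + 1) = 0} : ℤ)
      = ((p : ℤ) + 1) * ((p : ℤ) ^ m - 1) * (2 * (p : ℤ) ^ m - (p : ℤ) + 1) + 1 := by
  classical
  haveI hfp : Fact p.Prime := ⟨hp⟩
  have hm0 : 0 < m := by omega
  have hp0 : p ≠ 0 := hp.ne_zero
  -- characteristic p
  have hchar : CharP F p := by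
    obtain ⟨n, hrp, hcard⟩ := FiniteField.card F (ringChar F)
    have hdvd : ringChar F ∣ p ^ m := by
      rw [← hF, hcard]
      exact dvd_pow_self _ (by exact_mod_cast n.pos.ne')
    have heq := (Nat.prime_dvd_prime_iff_eq hrp hp).1 (hrp.dvd_of_dvd_pow hdvd)
    have hr := ringChar.charP F
    rwa [heq] at hr
  haveI := hchar
  have hp2 : (2 : F) ≠ 0 := by
    intro h
    have h2 : ((2 : ℕ) : F) = 0 := by exact_mod_cast h
    have hdvd := (CharP.cast_eq_zero_iff F p 2).1 h2
    have hpe : p = 2 := le_antisymm (Nat.le_of_dvd (by norm_num) hdvd) hp.two_le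
    rw [hpe] at hp4
    norm_num at hp4
  have hq : ∀ t : F, t ^ p ^ m = t := fun t => by
    have := FiniteField.pow_card t
    rwa [hF] at this
  -- the Frobenius power map
  set σ : F → F := fun t => t ^ p ^ k with hσ
  have σmul : ∀ s t : F, σ (s * t) = σ s * σ t := fun s t => mul_pow s t _
  have σadd : ∀ s t : F, σ (s + t) = σ s + σ t := fun s t => add_pow_char_pow s t p k
  have σne : ∀ t : F, t ≠ 0 → σ t ≠ 0 := fun t ht => pow_ne_zero _ ht
  have σdiv : ∀ s t : F, σ (s / t) = σ s / σ t := fun s t => div_pow s t _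
  -- fixed points
  have fix_of : ∀ (j : ℕ) (e : F), e ^ p = e → e ^ p ^ j = e := by
    intro j e he
    induction j with
    | zero => rw [pow_zero, pow_one]
    | succ i ih => rw [pow_succ, pow_mul, ih, he]
  have itk : ∀ (u : ℕ) (e : F), e ^ p ^ k = e → e ^ p ^ (u * k) = e := by
    intro u e he
    induction u with
    | zero => rw [Nat.zero_mul, pow_zero, pow_one]
    | succ i ih => rw [Nat.succ_mul, pow_add, pow_mul, ih]; exact he
  have itm : ∀ (v : ℕ) (e : F), e ^ p ^ (v * m) = e := by
    intro v e
    induction v with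
    | zero => rw [Nat.zero_mul, pow_zero, pow_one]
    | succ i ih => rw [Nat.succ_mul, pow_add, pow_mul, ih]; exact hq e
  have fix_to : ∀ e : F, e ^ p ^ k = e → e ^ p = e := by
    intro e he
    have hco : Nat.Coprime k m := Nat.Coprime.symm hgcd
    obtain ⟨u, -, hu⟩ := Nat.exists_mul_mod_eq_one_of_coprime hco (by omega)
    have hrep : k * u = m * (k * u / m) + 1 := by
      conv_lhs => rw [← Nat.div_add_mod (k * u) m]
      rw [hu]
    have h1 : e ^ p ^ (u * k) = e := itk u e he
    have h2 : e ^ p ^ (k * u) = e := by rwa [Nat.mul_comm u k] at h1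
    rw [hrep, pow_add, pow_one, pow_mul] at h2
    have h3 : e ^ p ^ (m * (k * u / m)) = e := by
      rw [Nat.mul_comm]; exact itm _ e
    rw [h3] at h2
    exact h2
  have fixiff : ∀ e : F, σ e = e ↔ e ^ p = e :=
    fun e => ⟨fun h => fix_to e h, fun h => fix_of k e h⟩
  -- a, b with a² + b² = -1 in the prime field
  let φ : ZMod p →+* F := ZMod.castHom (dvd_refl p) F
  obtain ⟨a0, b0, hab0⟩ := ZMod.sq_add_sq p (-1 : ZMod p)
  set a : F := φ a0 with ha
  set b : F := φ b0 with hb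
  have hab : a ^ 2 + b ^ 2 = -1 := by
    have h := congrArg φ hab0
    rw [map_add, map_pow, map_pow, map_neg, map_one] at h
    exact h
  have hafix : a ^ p = a := by rw [ha, ← map_pow, ZMod.pow_card]
  have hbfix : b ^ p = b := by rw [hb, ← map_pow, ZMod.pow_card]
  have σa : σ a = a := fix_of k a hafix
  have σb : σ b = b := fix_of k b hbfix
  -- the change of variables is a bijection
  have hMbij : Function.Bijective (Mmap a b (E := F)) :=
    Finite.injective_iff_bijective.1 (Mmap_inj hab hp2)
  let EqM : (F × F × F × F) ≃ (F × F × F × F) := Equiv.ofBijective _ hMbij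
  -- translation of the equations
  have hMσ : ∀ y : F × F × F × F, map4 σ (Mmap a b y) = Mmap a b (map4 σ y) :=
    fun y => map4_Mmap σ σadd σmul σa σb y
  have σsq : ∀ t : F, σ (t ^ 2) = σ t ^ 2 := fun t => by rw [sq, σmul, sq]
  have hQσ : ∀ y : F × F × F × F, qsum (map4 σ y) = σ (qsum y) := by
    intro y
    simp only [qsum, map4]
    rw [σadd, σadd, σadd, σsq, σsq, σsq, σsq]
  have σ0 : σ (0 : F) = 0 := zero_pow (pow_ne_zero k hp0)
  have hpk2 : p ^ k * p ^ k = p ^ (2 * k) := by rw [two_mul, pow_add]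
  have σσ : ∀ t : F, σ (σ t) = t ^ p ^ (2 * k) := fun t => by
    show (t ^ p ^ k) ^ p ^ k = _
    rw [← pow_mul, hpk2]
  have key : ∀ x : F × F × F × F,
      (x.1 ^ 2 + x.2.1 ^ 2 + x.2.2.1 ^ 2 + x.2.2.2 ^ 2 = 0 ∧
        x.1 ^ (p ^ k + 1) + x.2.1 ^ (p ^ k + 1) + x.2.2.1 ^ (p ^ k + 1)
          + x.2.2.2 ^ (p ^ k + 1) = 0 ∧
        x.1 ^ (p ^ (2 * k) + 1) + x.2.1 ^ (p ^ (2 * k) + 1) + x.2.2.1 ^ (p ^ (2 * k) + 1)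
          + x.2.2.2 ^ (p ^ (2 * k) + 1) = 0)
      ↔ (Mmap a b x ∈ Colset p F ∪ Rowset p F) := by
    intro x
    have hsol := sol_iff p hp0 σ σmul σne σdiv fixiff (Mmap a b x)
    rw [← hsol]
    have hc2 : det4 (Mmap a b x + map4 σ (Mmap a b x))
        = qsum x + 2 * dotp x (map4 σ x) + σ (qsum x) := by
      rw [hMσ, Mmap_add, det4_Mmap hab, qsum_add, hQσ]
    have hc3 : det4 (Mmap a b x + map4 σ (map4 σ (Mmap a b x)))
        = qsum x + 2 * dotp x (map4 σ (map4 σ x)) + σ (σ (qsum x)) := by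
      rw [hMσ, hMσ, Mmap_add, det4_Mmap hab, qsum_add, hQσ, hQσ]
    have hdot2 : dotp x (map4 σ x)
        = x.1 ^ (p ^ k + 1) + x.2.1 ^ (p ^ k + 1) + x.2.2.1 ^ (p ^ k + 1)
          + x.2.2.2 ^ (p ^ k + 1) := by
      simp only [dotp, map4, hσ]
      rw [pow_add, pow_add, pow_add, pow_add, pow_one, pow_one, pow_one, pow_one]
      ring
    have hdot3 : dotp x (map4 σ (map4 σ x))
        = x.1 ^ (p ^ (2 * k) + 1) + x.2.1 ^ (p ^ (2 * k) + 1) + x.2.2.1 ^ (p ^ (2 * k) + 1)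
          + x.2.2.2 ^ (p ^ (2 * k) + 1) := by
      simp only [dotp, map4]
      rw [σσ, σσ, σσ, σσ]
      rw [pow_add, pow_add, pow_add, pow_add, pow_one, pow_one, pow_one, pow_one]
      ring
    constructor
    · rintro ⟨e1, e2, e3⟩
      have hq1 : qsum x = 0 := e1
      refine ⟨by rw [det4_Mmap hab]; exact e1, ?_, ?_⟩
      · rw [hc2, hq1, σ0, hdot2, e2]; ring
      · rw [hc3, hq1, σ0, σ0, hdot3, e3]; ring
    · rintro ⟨s1, s2, s3⟩
      have hq1 : qsum x = 0 := by rw [det4_Mmap hab] at s1; exact s1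
      refine ⟨hq1, ?_, ?_⟩
      · rw [hc2, hq1, σ0] at s2
        have h2' : (2 : F) * dotp x (map4 σ x) = 0 := by linear_combination s2
        rcases mul_eq_zero.1 h2' with h | h
        · exact absurd h hp2
        · rw [← hdot2]; exact h
      · rw [hc3, hq1, σ0, σ0] at s3
        have h3' : (2 : F) * dotp x (map4 σ (map4 σ x)) = 0 := by linear_combination s3
        rcases mul_eq_zero.1 h3' with h | h
        · exact absurd h hp2
        · rw [← hdot3]; exact h
  -- cardinality via the bijection
  have hN : Nat.card {x : F × F × F × F //
        x.1 ^ 2 + x.2.1 ^ 2 + x.2.2.1 ^ 2 + x.2.2.2 ^ 2 = 0 ∧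
        x.1 ^ (p ^ k + 1) + x.2.1 ^ (p ^ k + 1) + x.2.2.1 ^ (p ^ k + 1)
          + x.2.2.2 ^ (p ^ k + 1) = 0 ∧
        x.1 ^ (p ^ (2 * k) + 1) + x.2.1 ^ (p ^ (2 * k) + 1) + x.2.2.1 ^ (p ^ (2 * k) + 1)
          + x.2.2.2 ^ (p ^ (2 * k) + 1) = 0}
      = (Colset p F ∪ Rowset p F).ncard := by
    rw [Nat.card_congr (Equiv.subtypeEquiv EqM key)]
    exact Nat.card_coe_set_eq _
  -- counting the pieces
  have hcardF : Nat.card F = p ^ m := by rw [Nat.card_eq_fintype_card, hF]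
  -- card of fixed elements
  have hFixcard : Nat.card {e : F // e ^ p = e} = p := by
    have hφinj : Function.Injective (fun z : ZMod p => φ z) := φ.injective
    have h1 : Set.range (fun z : ZMod p => φ z) ⊆ {e : F | e ^ p = e} := by
      rintro e ⟨z, rfl⟩
      show (φ z) ^ p = φ z
      rw [← map_pow, ZMod.pow_card]
    have hRfcard : (Set.range (fun z : ZMod p => φ z)).ncard = p := by
      rw [← Set.image_univ, Set.ncard_image_of_injective _ hφinj, Set.ncard_univ,
        Nat.card_eq_fintype_card, ZMod.card]
    have hle : {e : F | e ^ p = e}.ncard ≤ p := by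
      have hdeg : (Polynomial.X ^ p - Polynomial.X : Polynomial F).natDegree = p := by
        rw [Polynomial.natDegree_sub_eq_left_of_natDegree_lt, Polynomial.natDegree_X_pow]
        rw [Polynomial.natDegree_X, Polynomial.natDegree_X_pow]
        exact hp.one_lt
      have hne0 : (Polynomial.X ^ p - Polynomial.X : Polynomial F) ≠ 0 := by
        intro h
        rw [h, Polynomial.natDegree_zero] at hdeg
        exact hp0 hdeg.symm
      have hss : {e : F | e ^ p = e} ⊆ ↑((Polynomial.X ^ p - Polynomial.X : Polynomial F).roots.toFinset) := by
        intro e he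
        simp only [Finset.mem_coe, Multiset.mem_toFinset]
        rw [Polynomial.mem_roots']
        refine ⟨hne0, ?_⟩
        simp only [Polynomial.IsRoot, Polynomial.eval_sub, Polynomial.eval_pow,
          Polynomial.eval_X, sub_eq_zero]
        exact he
      calc {e : F | e ^ p = e}.ncard
          ≤ (↑((Polynomial.X ^ p - Polynomial.X : Polynomial F).roots.toFinset) : Set F).ncard :=
            Set.ncard_le_ncard hss (Set.toFinite _)
        _ = ((Polynomial.X ^ p - Polynomial.X : Polynomial F).roots.toFinset).card :=
            Set.ncard_coe_finset _
        _ ≤ Multiset.card (Polynomial.X ^ p - Polynomial.X : Polynomial F).roots :=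
            Multiset.toFinset_card_le _
        _ ≤ (Polynomial.X ^ p - Polynomial.X : Polynomial F).natDegree :=
            Polynomial.card_roots' _
        _ = p := hdeg
    have heqset : Set.range (fun z : ZMod p => φ z) = {e : F | e ^ p = e} :=
      Set.eq_of_subset_of_ncard_le h1 (by rw [hRfcard]; exact hle) (Set.toFinite _)
    have hfin : Nat.card {e : F // e ^ p = e} = ({e : F | e ^ p = e}).ncard :=
      Nat.card_coe_set_eq _
    rw [hfin, ← heqset, hRfcard]
  have hNE : Nat.card (NEt p F) = p + 1 := by
    rw [Nat.card_sum, hFixcard, Nat.card_unique]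
  -- cards of punctured spaces
  have hV2 : Nat.card {r : F × F // r ≠ 0} + 1 = p ^ m * p ^ m := by
    have hcompl : ({(0 : F × F)}ᶜ : Set (F × F)) = {r : F × F | r ≠ 0} := by
      ext r; simp
    have h := Set.ncard_add_ncard_compl ({(0 : F × F)} : Set (F × F))
    rw [Set.ncard_singleton, hcompl] at h
    have hcc : Nat.card (F × F) = p ^ m * p ^ m := by
      rw [Nat.card_prod, hcardF]
    rw [hcc] at h
    have hA' : Nat.card {r : F × F // r ≠ 0} = ({r : F × F | r ≠ 0}).ncard :=
      Nat.card_coe_set_eq _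
    omega
  have hV1 : Nat.card {s : F // s ≠ 0} + 1 = p ^ m := by
    have hcompl : ({(0 : F)}ᶜ : Set F) = {s : F | s ≠ 0} := by
      ext s; simp
    have h := Set.ncard_add_ncard_compl ({(0 : F)} : Set F)
    rw [Set.ncard_singleton, hcompl, hcardF] at h
    have hA' : Nat.card {s : F // s ≠ 0} = ({s : F | s ≠ 0}).ncard :=
      Nat.card_coe_set_eq _
    omega
  -- card of Colset
  have hColcard : (Colset p F).ncard
      = (p + 1) * Nat.card {r : F × F // r ≠ 0} + 1 := by
    rw [colset_eq p F hp0]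
    rw [Set.ncard_insert_of_notMem (by rintro ⟨z, hz⟩; exact colF_ne_zero p F z hz)
      (Set.toFinite _)]
    rw [← Set.image_univ, Set.ncard_image_of_injective _ (colF_inj p F), Set.ncard_univ,
      Nat.card_prod, hNE]
  have hRowcard : (Rowset p F).ncard = (Colset p F).ncard := by
    rw [rowset_eq, Set.ncard_image_of_injective _ trp_invol.injective]
  have hIntercard : ((Colset p F) ∩ (Rowset p F)).ncard
      = (p + 1) * ((p + 1) * Nat.card {s : F // s ≠ 0}) + 1 := by
    rw [interset_eq p F hp0]
    rw [Set.ncard_insert_of_notMem (by rintro ⟨z, hz⟩; exact interF_ne_zero p F z hz)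
      (Set.toFinite _)]
    rw [← Set.image_univ, Set.ncard_image_of_injective _ (interF_inj p F), Set.ncard_univ,
      Nat.card_prod, Nat.card_prod, hNE]
  have hunion := Set.ncard_union_add_ncard_inter (Colset p F) (Rowset p F)
    (Set.toFinite _) (Set.toFinite _)
  rw [hColcard, hRowcard, hColcard, hIntercard] at hunion
  -- final arithmetic over ℤ
  rw [hN]
  set A := Nat.card {r : F × F // r ≠ 0} with hAdef
  set B := Nat.card {s : F // s ≠ 0} with hBdef
  have hAZ : (A : ℤ) = (p : ℤ) ^ m * (p : ℤ) ^ m - 1 := by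
    have := congrArg (Nat.cast : ℕ → ℤ) hV2
    push_cast at this
    linarith
  have hBZ : (B : ℤ) = (p : ℤ) ^ m - 1 := by
    have := congrArg (Nat.cast : ℕ → ℤ) hV1
    push_cast at this
    linarith
  have hUZ : ((Colset p F ∪ Rowset p F).ncard : ℤ)
      + (((p : ℤ) + 1) * (((p : ℤ) + 1) * (B : ℤ)) + 1)
      = (((p : ℤ) + 1) * (A : ℤ) + 1) + (((p : ℤ) + 1) * (A : ℤ) + 1) := by
    exact_mod_cast congrArg (Nat.cast : ℕ → ℤ) hunion
  linear_combination hUZ + 2 * ((p : ℤ) + 1) * hAZ - ((p : ℤ) + 1) ^ 2 * hBZ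
end

section
/- Suppose p ≡ 3 (mod 4). Then the number of pairs (x₁,x₂) ∈ F² satisfying x₁² + x₂² = 1, x₁^{p^k+1} + x₂^{p^k+1} = 1, and x₁^{p^{2k}+1} + x₂^{p^{2k}+1} = 1 equals p + 1. -/
open Polynomial

lemma nt_aux (p m k t : ℕ) (hp : 2 ≤ p) (hm : Odd m) (hk : 0 < k)
    (hgcd : Nat.gcd m k = 1) (ht1 : t ∣ p ^ m + 1) (ht2 : t ∣ p ^ (2 * k) - 1) :
    t ∣ p + 1 := by
  have hpk : 1 ≤ p ^ (2 * k) := Nat.one_le_pow _ _ (by omega)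
  have hm0 : m ≠ 0 := by rintro rfl; exact (Nat.not_odd_iff_even.mpr Even.zero) hm
  have hz1 : (t : ℤ) ∣ (p : ℤ) ^ m + 1 := by exact_mod_cast Int.natCast_dvd_natCast.mpr ht1
  have hz2 : (t : ℤ) ∣ (p : ℤ) ^ (2 * k) - 1 := by
    have := Int.natCast_dvd_natCast.mpr ht2
    push_cast [Nat.cast_sub hpk] at this
    exact_mod_cast this
  have hz2m : (t : ℤ) ∣ (p : ℤ) ^ (2 * m) - 1 := by
    refine hz1.trans ⟨(p : ℤ) ^ m - 1, by ring⟩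
  have hco : Nat.Coprime p t := by
    have h1 : Nat.Coprime t (p ^ m) := by
      have h2 : Nat.Coprime (p ^ m) (p ^ m + 1) := by simp
      exact Nat.Coprime.coprime_dvd_left ht1 h2.symm
    exact (Nat.Coprime.coprime_dvd_right (dvd_pow_self p hm0) h1).symm
  have hsq : (t : ℤ) ∣ (p : ℤ) ^ 2 - 1 := by
    set hu := ZMod.unitOfCoprime (n := t) p hco with hu_def
    have hcast : (hu : ZMod t) = (p : ZMod t) := ZMod.coe_unitOfCoprime p hco
    have key : ∀ n : ℕ, (t : ℤ) ∣ (p : ℤ) ^ n - 1 → hu ^ n = 1 := by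
      intro n hdvd
      apply Units.ext
      rw [Units.val_pow_eq_pow_val, hcast, Units.val_one]
      have := (ZMod.intCast_zmod_eq_zero_iff_dvd ((p : ℤ) ^ n - 1) t).mpr hdvd
      push_cast at this
      linear_combination this
    have hord : orderOf hu ∣ 2 := by
      have d1 := orderOf_dvd_of_pow_eq_one (key _ hz2m)
      have d2 := orderOf_dvd_of_pow_eq_one (key _ hz2)
      have := Nat.dvd_gcd d1 d2
      rwa [Nat.gcd_mul_left, hgcd, mul_one] at this
    have h2 : hu ^ 2 = 1 := orderOf_dvd_iff_pow_eq_one.mp hord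
    have h2' : ((p : ZMod t)) ^ 2 = 1 := by
      have := congrArg Units.val h2
      rwa [Units.val_pow_eq_pow_val, hcast, Units.val_one] at this
    have : (((p : ℤ) ^ 2 - 1 : ℤ) : ZMod t) = 0 := by push_cast; linear_combination h2'
    exact (ZMod.intCast_zmod_eq_zero_iff_dvd _ _).mp this
  obtain ⟨j, hj⟩ := hm
  have hdvd : (t : ℤ) ∣ (p : ℤ) ^ m - (p : ℤ) := by
    have h1 : ((p : ℤ) ^ 2 - 1) ∣ ((p : ℤ) ^ 2) ^ j - 1 := by
      simpa using sub_dvd_pow_sub_pow ((p : ℤ) ^ 2) 1 j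
    have h2 : (p : ℤ) ^ m - (p : ℤ) = (p : ℤ) * (((p : ℤ) ^ 2) ^ j - 1) := by
      subst hj; ring
    exact h2 ▸ (hsq.trans h1).mul_left _
  have hfin : (t : ℤ) ∣ (p : ℤ) + 1 := by
    have h := dvd_sub hz1 hdvd
    have e : ((p : ℤ) ^ m + 1) - ((p : ℤ) ^ m - p) = (p : ℤ) + 1 := by ring
    rwa [e] at h
  exact_mod_cast hfin


lemma quad_aux {K : Type*} [Field K] (u w : K) (hu : u ≠ 0) (h2 : (2:K) ≠ 0)
    (h : u + u⁻¹ = 2 * w) : w = 1 ↔ u = 1 := by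
  constructor
  · intro hw
    rw [hw, mul_one] at h
    have hsq : (u - 1) ^ 2 = 0 := by
      have h' : u * (u + u⁻¹) = u * 2 := by rw [h]
      rw [mul_add, mul_inv_cancel₀ hu] at h'
      linear_combination h'
    have := pow_eq_zero_iff (n := 2) (by norm_num) |>.mp hsq
    exact sub_eq_zero.mp this
  · intro hu1
    rw [hu1] at h
    norm_num at h
    have : (2 : K) * 1 = 2 * w := by rw [mul_one]; exact h
    exact (mul_left_cancel₀ h2 this).symm

lemma hd_even_aux (p : ℕ) (hp : 1 ≤ p) (n : ℕ) : p + 1 ∣ p ^ (2 * n) - 1 := by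
  have h1 : ((p : ℤ) + 1) ∣ (p : ℤ) ^ (2 * n) - 1 := by
    have h2 : ((p : ℤ) + 1) ∣ (p : ℤ) ^ 2 - 1 := ⟨(p : ℤ) - 1, by ring⟩
    have h3 : ((p : ℤ) ^ 2 - 1) ∣ ((p : ℤ) ^ 2) ^ n - 1 := by
      simpa using sub_dvd_pow_sub_pow ((p : ℤ) ^ 2) 1 n
    rw [pow_mul]
    exact h2.trans h3
  have hle : 1 ≤ p ^ (2 * n) := Nat.one_le_pow _ _ (by omega)
  have := Int.natCast_dvd_natCast (m := p + 1) (n := p ^ (2 * n) - 1)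
  rw [Nat.cast_sub hle] at this
  exact_mod_cast this.mp (by exact_mod_cast h1)

theorem N1_one_one (p m k : ℕ) (hp : p.Prime) (hp4 : p % 4 = 3)
    (hm : Odd m) (hm5 : 5 ≤ m) (hk : 0 < k) (hgcd : Nat.gcd m k = 1)
    (F : Type*) [Field F] [Fintype F] (hF : Fintype.card F = p ^ m) :
    Nat.card {x : F × F //
        x.1 ^ 2 + x.2 ^ 2 = 1 ∧
        x.1 ^ (p ^ k + 1) + x.2 ^ (p ^ k + 1) = 1 ∧
        x.1 ^ (p ^ (2 * k) + 1) + x.2 ^ (p ^ (2 * k) + 1) = 1} = p + 1 := by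
  have hp2 : 2 ≤ p := hp.two_le
  have hp3 : 3 ≤ p := by rcases Nat.lt_or_ge p 4 with h | h; · omega
                         · omega
  -- -1 is not a square in F
  have hcard4 : Fintype.card F % 4 = 3 := by
    rw [hF]
    obtain ⟨j, rfl⟩ := hm
    have h1 : p ^ (2 * j + 1) ≡ 3 ^ (2 * j + 1) [MOD 4] := Nat.ModEq.pow _ hp4
    have h2 : (3:ℕ) ^ (2 * j + 1) ≡ 3 [MOD 4] := by
      have h9 : (9:ℕ) ≡ 1 [MOD 4] := by decide
      calc (3:ℕ) ^ (2 * j + 1) = 9 ^ j * 3 := by rw [pow_succ, pow_mul]; norm_num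
        _ ≡ 1 ^ j * 3 [MOD 4] := Nat.ModEq.mul (Nat.ModEq.pow _ h9) rfl
        _ = 3 := by ring
    have := h1.trans h2
    simpa [Nat.ModEq] using this
  have hsq : ¬ IsSquare (-1 : F) := by
    rw [FiniteField.isSquare_neg_one_iff]
    simp [hcard4]
  -- the irreducible polynomial X^2 + 1
  have hirr : Irreducible (X ^ 2 + 1 : F[X]) := by
    have : (X ^ 2 + 1 : F[X]) = X ^ 2 - C (-1) := by
      rw [map_neg, map_one, sub_neg_eq_add]
    rw [this]
    refine X_pow_sub_C_irreducible_of_prime Nat.prime_two (fun b hb => hsq ⟨b, ?_⟩)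
    rw [← hb]; ring
  haveI hfact : Fact (Irreducible (X ^ 2 + 1 : F[X])) := ⟨hirr⟩
  set q : F[X] := X ^ 2 + 1 with hq_def
  have hq0 : q ≠ 0 := hirr.ne_zero
  have hqmonic : q.Monic := by
    have := Polynomial.monic_X_pow_add_C (1:F) (n := 2) (by norm_num)
    simpa [hq_def] using this
  have hqdeg : q.natDegree = 2 := by
    simpa [hq_def] using Polynomial.natDegree_X_pow_add_C (n := 2) (r := (1:F))
  set K := AdjoinRoot q with hK_def
  set i : K := AdjoinRoot.root q with hi_def
  have hi : i ^ 2 = -1 := by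
    have h0 : AdjoinRoot.mk q (X ^ 2 + 1 : F[X]) = 0 := by
      conv_lhs => rw [← hq_def]
      exact AdjoinRoot.mk_self
    rw [map_add, map_pow, AdjoinRoot.mk_X, map_one] at h0
    have h1 : i ^ 2 + 1 = 0 := h0
    linear_combination h1
  -- characteristic
  haveI hfp : Fact p.Prime := ⟨hp⟩
  have hcharF : CharP F p := by
    have hchar := ringChar.charP F
    obtain ⟨n, hrp, hcard⟩ := FiniteField.card F (ringChar F)
    have : ringChar F = p := by
      have hdvd : ringChar F ∣ p ^ m := by
        rw [← hF, hcard]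
        exact dvd_pow_self _ (by positivity)
      have := (Nat.Prime.dvd_of_dvd_pow hrp hdvd)
      exact (Nat.prime_dvd_prime_iff_eq hrp hp).mp this
    rwa [this] at hchar
  haveI := hcharF
  haveI hcharK : CharP K p := charP_of_injective_algebraMap (algebraMap F K).injective p
  -- finiteness and cardinality of K
  haveI : Module.Finite F K := (AdjoinRoot.powerBasis hq0).finite
  haveI : Finite K := Module.finite_of_finite F
  haveI : Fintype K := Fintype.ofFinite K
  have hfinrank : Module.finrank F K = 2 := by
    rw [(AdjoinRoot.powerBasis hq0).finrank, AdjoinRoot.powerBasis_dim]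
    exact hqdeg
  have hcardK : Fintype.card K = p ^ (2 * m) := by
    rw [Module.card_eq_pow_finrank (K := F) (V := K), hfinrank, hF, ← pow_mul, mul_comm]
  -- the embedding
  set a : F →+* K := algebraMap F K with ha_def
  have hainj : Function.Injective a := (algebraMap F K).injective
  have h2K : (2 : K) ≠ 0 := by
    have : ((2 : ℕ) : K) ≠ 0 := by
      rw [Ne, CharP.cast_eq_zero_iff K p 2]
      intro hdvd
      have := Nat.le_of_dvd (by norm_num) hdvd
      omega
    simpa using this
  have hpodd : Odd p := hp.odd_of_ne_two (by omega)
  -- i^p = -i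
  have hip : i ^ p = -i := by
    have h1 : p = 2 * (p / 2) + 1 := by omega
    have h2 : Odd (p / 2) := by rw [Nat.odd_iff]; omega
    calc i ^ p = (i ^ 2) ^ (p / 2) * i := by rw [← pow_mul, ← pow_succ, ← h1]
      _ = (-1 : K) ^ (p / 2) * i := by rw [hi]
      _ = -i := by rw [h2.neg_one_pow, neg_one_mul]
  -- Frobenius action
  have hfrob : ∀ (j : ℕ) (x y : F),
      (a x + i * a y) ^ (p ^ j) = a (x ^ (p ^ j)) + (-1 : K) ^ j * (i * a (y ^ (p ^ j))) := by
    intro j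
    induction j with
    | zero => intro x y; simp
    | succ j ih =>
      intro x y
      have hps : p ^ (j + 1) = p ^ j * p := by rw [pow_succ]
      rw [hps, pow_mul, ih x y, add_pow_char, mul_pow, mul_pow, hip]
      rw [← map_pow, ← map_pow, ← pow_mul x, ← pow_mul y, ← hps]
      have h3 : ((-1 : K) ^ j) ^ p = (-1 : K) ^ j := by
        rw [← pow_mul, mul_comm, pow_mul, hpodd.neg_one_pow]
      rw [h3, pow_succ]
      ring
  -- conjugate Frobenius
  have hzbfrob : ∀ (j : ℕ) (x y : F),
      (a x - i * a y) ^ (p ^ j) = a (x ^ (p ^ j)) - (-1 : K) ^ j * (i * a (y ^ (p ^ j))) := by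
    intro j x y
    have h1 : a x - i * a y = a x + i * a (-y) := by rw [map_neg]; ring
    have h2 : (-y) ^ (p ^ j) = -(y ^ (p ^ j)) := Odd.neg_pow (hpodd.pow) y
    rw [h1, hfrob j x (-y), h2, map_neg]
    ring
  -- conjugation is Frobenius^m
  have hconj : ∀ x y : F, (a x + i * a y) ^ (p ^ m) = a x - i * a y := by
    intro x y
    have hx : x ^ (p ^ m) = x := by rw [← hF]; exact FiniteField.pow_card x
    have hy : y ^ (p ^ m) = y := by rw [← hF]; exact FiniteField.pow_card y
    rw [hfrob m x y, hx, hy, hm.neg_one_pow]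
    ring
  -- product with conjugate
  have hmulconj : ∀ x y : F, (a x + i * a y) * (a x - i * a y) = a (x ^ 2 + y ^ 2) := by
    intro x y
    rw [map_add, map_pow, map_pow]
    linear_combination (-(a y ^ 2)) * hi
  have hainj1 : ∀ s : F, s = 1 ↔ a s = 1 :=
    fun s => ⟨fun h => by rw [h, map_one], fun h => hainj (by rw [map_one]; exact h)⟩
  -- the key equivalence
  have key : ∀ (x y : F) (j : ℕ), (a x + i * a y) * (a x - i * a y) = 1 →
      ((x ^ (p ^ j + 1) + y ^ (p ^ j + 1) = 1) ↔
        (a x + i * a y) ^ (if Odd j then p ^ j + 1 else p ^ j - 1) = 1) := by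
    intro x y j h1
    set z : K := a x + i * a y with hz_def
    set zb : K := a x - i * a y with hzb_def
    have hz0 : z ≠ 0 := by
      intro h; rw [h, zero_mul] at h1; exact zero_ne_one h1
    have hzb : zb = z⁻¹ := eq_inv_of_mul_eq_one_right h1
    set c : F := x ^ p ^ j with hc_def
    set d : F := y ^ p ^ j with hd_def
    by_cases hj : Odd j
    · rw [if_pos hj]
      have hfz : z ^ (p ^ j) = a c - i * a d := by
        rw [hz_def, hfrob j x y, hj.neg_one_pow]; ring
      have hfzb : zb ^ (p ^ j) = a c + i * a d := by
        rw [hzb_def, hzbfrob j x y, hj.neg_one_pow]; ring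
      have hu0 : z ^ (p ^ j + 1) ≠ 0 := pow_ne_zero _ hz0
      have hsum : z ^ (p ^ j + 1) + (z ^ (p ^ j + 1))⁻¹ =
          2 * a (x ^ (p ^ j + 1) + y ^ (p ^ j + 1)) := by
        have huinv : (z ^ (p ^ j + 1))⁻¹ = zb ^ (p ^ j + 1) := by rw [hzb, inv_pow]
        rw [huinv, pow_succ z, pow_succ zb, hfz, hfzb,
          map_add, pow_succ x, pow_succ y, map_mul, map_mul]
        linear_combination (-2 * a d * a y) * hi
      exact (hainj1 _).trans (quad_aux _ _ hu0 h2K hsum)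
    · rw [if_neg hj]
      have hjeven : Even j := Nat.not_odd_iff_even.mp hj
      have hfz : z ^ (p ^ j) = a c + i * a d := by
        rw [hz_def, hfrob j x y, hjeven.neg_one_pow]; ring
      have hfzb : zb ^ (p ^ j) = a c - i * a d := by
        rw [hzb_def, hzbfrob j x y, hjeven.neg_one_pow]; ring
      have hpj1 : 1 ≤ p ^ j := Nat.one_le_pow _ _ (by omega)
      obtain ⟨t, ht⟩ : ∃ t, p ^ j = t + 1 := ⟨p ^ j - 1, by omega⟩
      have htt : p ^ j - 1 = t := by omega
      rw [htt]
      have hu0 : z ^ t ≠ 0 := pow_ne_zero _ hz0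
      have he1 : z ^ (p ^ j) * zb = z ^ t := by
        rw [ht, pow_succ, hzb, mul_assoc, mul_inv_cancel₀ hz0, mul_one]
      have he2 : zb ^ (p ^ j) * z = (z ^ t)⁻¹ := by
        rw [hzb, inv_pow, ht, pow_succ, mul_inv, mul_assoc, inv_mul_cancel₀ hz0, mul_one]
      have hsum : z ^ t + (z ^ t)⁻¹ =
          2 * a (x ^ (p ^ j + 1) + y ^ (p ^ j + 1)) := by
        rw [← he2, ← he1, hfz, hfzb,
          map_add, pow_succ x, pow_succ y, map_mul, map_mul]
        linear_combination (-2 * a d * a y) * hi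
      exact (hainj1 _).trans (quad_aux _ _ hu0 h2K hsum)
  -- divisibility facts
  have hd_odd : ∀ n : ℕ, Odd n → p + 1 ∣ p ^ n + 1 := by
    intro n hn
    simpa using hn.nat_add_dvd_pow_add_pow p 1
  have hd_even : ∀ n : ℕ, p + 1 ∣ p ^ (2 * n) - 1 := hd_even_aux p (by omega)
  have hdm : p + 1 ∣ p ^ m + 1 := hd_odd m hm
  have hnotodd2k : ¬ Odd (2 * k) := by rw [Nat.odd_iff]; omega
  have hEk : p + 1 ∣ (if Odd k then p ^ k + 1 else p ^ k - 1) := by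
    by_cases hkodd : Odd k
    · rw [if_pos hkodd]; exact hd_odd k hkodd
    · rw [if_neg hkodd]
      have hke : k % 2 = 0 := by rwa [Nat.odd_iff, ← Ne, Nat.mod_two_ne_one] at hkodd
      obtain ⟨t, rfl⟩ : ∃ t, k = 2 * t := ⟨k / 2, by omega⟩
      exact hd_even t
  have hE2k : p + 1 ∣ (if Odd (2 * k) then p ^ (2 * k) + 1 else p ^ (2 * k) - 1) := by
    rw [if_neg hnotodd2k]; exact hd_even k
  -- w^(p+1)=1 implies the three conditions, and vice versa
  have hwd : ∀ x y : F,
      (x ^ 2 + y ^ 2 = 1 ∧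
       x ^ (p ^ k + 1) + y ^ (p ^ k + 1) = 1 ∧
       x ^ (p ^ (2 * k) + 1) + y ^ (p ^ (2 * k) + 1) = 1) →
      (a x + i * a y) ^ (p + 1) = 1 := by
    rintro x y ⟨h1, h2, h3⟩
    set z : K := a x + i * a y with hz_def
    have hz1 : z * (a x - i * a y) = 1 := by rw [hz_def, hmulconj x y, h1, map_one]
    have hzpm : z ^ (p ^ m + 1) = 1 := by
      rw [pow_succ, hz_def, hconj x y, ← hz_def, mul_comm]
      exact hz1
    have h3' : z ^ (p ^ (2 * k) - 1) = 1 := by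
      have h := (key x y (2 * k) hz1).mp h3
      rwa [if_neg hnotodd2k] at h
    have hdvd1 : orderOf z ∣ p ^ m + 1 := orderOf_dvd_of_pow_eq_one hzpm
    have hdvd2 : orderOf z ∣ p ^ (2 * k) - 1 := orderOf_dvd_of_pow_eq_one h3'
    exact orderOf_dvd_iff_pow_eq_one.mp (nt_aux p m k (orderOf z) hp2 hm hk hgcd hdvd1 hdvd2)
  -- decomposition of elements of K
  have hdecomp : ∀ w : K, ∃ x y : F, w = a x + i * a y := by
    intro w
    obtain ⟨g0, rfl⟩ := AdjoinRoot.mk_surjective w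
    refine ⟨(g0 %ₘ q).coeff 0, (g0 %ₘ q).coeff 1, ?_⟩
    have hmod : AdjoinRoot.mk q g0 = AdjoinRoot.mk q (g0 %ₘ q) := by
      conv_lhs => rw [← Polynomial.modByMonic_add_div g0 q]
      rw [map_add, map_mul, AdjoinRoot.mk_self, zero_mul, add_zero]
    have hdeg : (g0 %ₘ q).natDegree ≤ 1 := by
      by_cases hr0 : g0 %ₘ q = 0
      · rw [hr0]; simp
      · have hlt := Polynomial.degree_modByMonic_lt g0 hqmonic
        have : (g0 %ₘ q).natDegree < q.natDegree :=
          (Polynomial.natDegree_lt_natDegree_iff hr0).mpr hlt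
        omega
    rw [hmod]
    conv_lhs => rw [Polynomial.eq_X_add_C_of_natDegree_le_one hdeg]
    rw [map_add, map_mul, AdjoinRoot.mk_X, AdjoinRoot.mk_C, AdjoinRoot.mk_C]
    have hof : ∀ s : F, (s : AdjoinRoot q) = a s := by
      intro s
      rw [ha_def, AdjoinRoot.algebraMap_eq]
    rw [hof, hof]
    ring
  -- reverse implication
  have hwd' : ∀ x y : F, (a x + i * a y) ^ (p + 1) = 1 →
      (x ^ 2 + y ^ 2 = 1 ∧
       x ^ (p ^ k + 1) + y ^ (p ^ k + 1) = 1 ∧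
       x ^ (p ^ (2 * k) + 1) + y ^ (p ^ (2 * k) + 1) = 1) := by
    intro x y hw
    set z : K := a x + i * a y with hz_def
    have hpows : ∀ n : ℕ, p + 1 ∣ n → z ^ n = 1 := by
      rintro n ⟨c0, rfl⟩
      rw [pow_mul, hw, one_pow]
    have hzpm : z ^ (p ^ m + 1) = 1 := hpows _ hdm
    have hz1 : z * (a x - i * a y) = 1 := by
      rw [hz_def, ← hconj x y, ← hz_def, mul_comm, ← pow_succ]
      exact hzpm
    have h1 : x ^ 2 + y ^ 2 = 1 := by
      apply hainj
      rw [← hmulconj x y, map_one, ← hz_def]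
      exact hz1
    refine ⟨h1, ?_, ?_⟩
    · exact (key x y k hz1).mpr (hpows _ hEk)
    · exact (key x y (2 * k) hz1).mpr (hpows _ hE2k)
  -- injectivity of the decomposition
  have hinj2 : ∀ x1 y1 x2 y2 : F, a x1 + i * a y1 = a x2 + i * a y2 → x1 = x2 ∧ y1 = y2 := by
    intro x1 y1 x2 y2 h
    by_cases hy : y1 = y2
    · subst hy
      have hx : a x1 = a x2 := by
        have := add_right_cancel h
        exact this
      exact ⟨hainj hx, rfl⟩
    · exfalso
      have hyF : y1 - y2 ≠ 0 := sub_ne_zero.mpr hy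
      have hne : a y1 - a y2 ≠ 0 := by
        rw [← map_sub]
        intro hh
        exact hyF (hainj (by rw [hh, map_zero]))
      have hia : i = a ((x2 - x1) / (y1 - y2)) := by
        rw [map_div₀, map_sub, map_sub]
        rw [eq_div_iff hne]
        linear_combination h
      apply hsq
      refine ⟨(x2 - x1) / (y1 - y2), ?_⟩
      apply hainj
      rw [map_neg, map_one, map_mul, ← hia]
      linear_combination -hi
  -- the bijection
  have hbij : Nat.card {x : F × F //
        x.1 ^ 2 + x.2 ^ 2 = 1 ∧
        x.1 ^ (p ^ k + 1) + x.2 ^ (p ^ k + 1) = 1 ∧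
        x.1 ^ (p ^ (2 * k) + 1) + x.2 ^ (p ^ (2 * k) + 1) = 1} =
      Nat.card {w : K // w ^ (p + 1) = 1} := by
    apply Nat.card_eq_of_bijective (fun s => ⟨a s.1.1 + i * a s.1.2, hwd s.1.1 s.1.2 s.2⟩)
    constructor
    · rintro ⟨⟨x1, y1⟩, h1⟩ ⟨⟨x2, y2⟩, h2⟩ hval
      have h := congrArg Subtype.val hval
      simp only at h
      obtain ⟨hx, hy⟩ := hinj2 x1 y1 x2 y2 h
      subst hx; subst hy; rfl
    · rintro ⟨w, hw⟩
      obtain ⟨x, y, rfl⟩ := hdecomp w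
      exact ⟨⟨(x, y), hwd' x y hw⟩, rfl⟩
  rw [hbij]
  -- count the (p+1)-th roots of unity in K
  obtain ⟨g, hg⟩ := IsCyclic.exists_generator (α := Kˣ)
  have hordg : orderOf g = p ^ (2 * m) - 1 := by
    calc orderOf g = Nat.card Kˣ := orderOf_eq_card_of_forall_mem_zpowers hg
      _ = Nat.card K - 1 := Nat.card_units K
      _ = Fintype.card K - 1 := by rw [Nat.card_eq_fintype_card]
      _ = p ^ (2 * m) - 1 := by rw [hcardK]
  have hprim : IsPrimitiveRoot g (p ^ (2 * m) - 1) := hordg ▸ IsPrimitiveRoot.orderOf g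
  obtain ⟨c0, hc0⟩ := hd_even m
  have h2le : 2 ≤ p ^ (2 * m) := le_trans hp2 (Nat.le_self_pow (by omega) p)
  have hn0 : 0 < p ^ (2 * m) - 1 := by omega
  have hprim2 : IsPrimitiveRoot (g ^ c0) (p + 1) := hprim.pow hn0 (by rw [hc0, mul_comm])
  have hprim3 : IsPrimitiveRoot ((g ^ c0 : Kˣ) : K) (p + 1) :=
    IsPrimitiveRoot.coe_units_iff.mpr hprim2
  have hfinset := hprim3.card_nthRootsFinset
  have hsetT : {w : K | w ^ (p + 1) = 1} = ↑(Polynomial.nthRootsFinset (p + 1) (1 : K)) := by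
    ext w
    simp [Polynomial.mem_nthRootsFinset (show 0 < p + 1 by omega) (1 : K)]
  calc Nat.card {w : K // w ^ (p + 1) = 1}
      = Nat.card {w : K | w ^ (p + 1) = 1} := rfl
    _ = ({w : K | w ^ (p + 1) = 1} : Set K).ncard := Nat.card_coe_set_eq _
    _ = (Polynomial.nthRootsFinset (p + 1) (1 : K) : Set K).ncard := by rw [hsetT]
    _ = (Polynomial.nthRootsFinset (p + 1) (1 : K)).card := Set.ncard_coe_finset _
    _ = p + 1 := hfinset
end

section
/- Suppose p ≡ 3 (mod 4). Then the number of pairs (x₃,x₄) ∈ F² satisfying x₃² + x₄² = −1, x₃^{p^k+1} + x₄^{p^k+1} = −1, and x₃^{p^{2k}+1} + x₄^{p^{2k}+1} = −1 equals p + 1. -/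
open Polynomial Finset

private lemma pow_pow_self' {M : Type*} [Monoid M] {x : M} {p a : ℕ}
    (h : x ^ p ^ a = x) : ∀ b, x ^ p ^ (a * b) = x := by
  intro b
  induction b with
  | zero => simp
  | succ n ih =>
      have hexp : p ^ (a * (n + 1)) = p ^ (a * n) * p ^ a := by
        rw [← pow_add]; ring_nf
      rw [hexp, pow_mul, ih, h]

private lemma pow_p_eq {M : Type*} [Monoid M] {x : M} {p m k : ℕ}
    (hm1 : 1 < m) (hgcd : Nat.gcd m k = 1)
    (hxm : x ^ p ^ m = x) (hxk : x ^ p ^ k = x) : x ^ p = x := by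
  have hco : Nat.Coprime k m := (Nat.coprime_comm).mp hgcd
  obtain ⟨t, -, ht⟩ := Nat.exists_mul_mod_eq_one_of_coprime hco hm1
  have hdm := Nat.div_add_mod (k * t) m
  set s := k * t / m with hs
  have hkt : k * t = m * s + 1 := by omega
  have h1 : x ^ p ^ (k * t) = x := pow_pow_self' hxk t
  have h2 : x ^ p ^ (m * s + 1) = x ^ p := by
    rw [pow_succ, pow_mul, pow_pow_self' hxm s]
  rw [hkt, h2] at h1
  exact h1

private lemma sq_add_sq_eq_zero' {K : Type*} [Field K] (hns : ¬ IsSquare (-1 : K))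
    {a b : K} (h : a ^ 2 + b ^ 2 = 0) : a = 0 ∧ b = 0 := by
  by_cases hb : b = 0
  · refine ⟨?_, hb⟩
    have ha : a ^ 2 = 0 := by rw [hb] at h; simpa using h
    exact sq_eq_zero_iff.mp ha
  · exfalso
    apply hns
    refine ⟨a * b⁻¹, ?_⟩
    field_simp
    linear_combination -h

private lemma circle_count (p : ℕ) [Fact p.Prime] (hp4 : p % 4 = 3) :
    (Finset.univ.filter (fun x : ZMod p × ZMod p => x.1 ^ 2 + x.2 ^ 2 = -1)).card
      = p + 1 := by
  have hp : p.Prime := Fact.out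
  haveI : NeZero p := ⟨hp.ne_zero⟩
  have hns : ¬ IsSquare (-1 : ZMod p) := by
    rw [ZMod.exists_sq_eq_neg_one_iff]
    simpa using hp4
  set N : ZMod p → ℕ :=
    fun c => (Finset.univ.filter (fun x : ZMod p × ZMod p => x.1 ^ 2 + x.2 ^ 2 = c)).card
    with hN
  have htotal : ∑ c : ZMod p, N c = p * p := by
    have h := Finset.card_eq_sum_card_fiberwise
      (f := fun x : ZMod p × ZMod p => x.1 ^ 2 + x.2 ^ 2)
      (s := Finset.univ) (t := Finset.univ) (fun x _ => Finset.mem_univ _)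
    rw [Finset.card_univ, Fintype.card_prod, ZMod.card] at h
    exact h.symm
  have hzero : N 0 = 1 := by
    have hset : (Finset.univ.filter (fun x : ZMod p × ZMod p => x.1 ^ 2 + x.2 ^ 2 = 0))
        = {((0 : ZMod p), (0 : ZMod p))} := by
      ext x
      simp only [Finset.mem_filter, Finset.mem_univ, true_and, Finset.mem_singleton]
      constructor
      · intro hx
        obtain ⟨h1, h2⟩ := sq_add_sq_eq_zero' hns hx
        exact Prod.ext h1 h2
      · rintro rfl; simp
    show (Finset.univ.filter (fun x : ZMod p × ZMod p => x.1 ^ 2 + x.2 ^ 2 = 0)).card = 1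
    rw [hset, Finset.card_singleton]
  have heq : ∀ c : ZMod p, c ≠ 0 → N c = N 1 := by
    intro c hc
    obtain ⟨u, v, huv⟩ := ZMod.sq_add_sq p c
    show (Finset.univ.filter (fun x : ZMod p × ZMod p => x.1 ^ 2 + x.2 ^ 2 = c)).card
      = (Finset.univ.filter (fun x : ZMod p × ZMod p => x.1 ^ 2 + x.2 ^ 2 = 1)).card
    refine (Finset.card_bij'
      (i := fun (x : ZMod p × ZMod p) _ => ((x.1 * u + x.2 * v) / c, (x.2 * u - x.1 * v) / c))
      (j := fun (a : ZMod p × ZMod p) _ => (a.1 * u - a.2 * v, a.1 * v + a.2 * u))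
      ?_ ?_ ?_ ?_)
    · intro x hx
      simp only [Finset.mem_filter, Finset.mem_univ, true_and] at hx ⊢
      field_simp
      linear_combination (u ^ 2 + v ^ 2) * hx + c * huv
    · intro a ha
      simp only [Finset.mem_filter, Finset.mem_univ, true_and] at ha ⊢
      linear_combination (a.1 ^ 2 + a.2 ^ 2) * huv + c * ha
    · intro x hx
      simp only [Finset.mem_filter, Finset.mem_univ, true_and] at hx
      apply Prod.ext
      · show ((x.1 * u + x.2 * v) / c) * u - ((x.2 * u - x.1 * v) / c) * v = x.1
        field_simp
        linear_combination x.1 * huv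
      · show ((x.1 * u + x.2 * v) / c) * v + ((x.2 * u - x.1 * v) / c) * u = x.2
        field_simp
        linear_combination x.2 * huv
    · intro a ha
      simp only [Finset.mem_filter, Finset.mem_univ, true_and] at ha
      apply Prod.ext
      · show ((a.1 * u - a.2 * v) * u + (a.1 * v + a.2 * u) * v) / c = a.1
        field_simp
        linear_combination a.1 * huv
      · show ((a.1 * v + a.2 * u) * u - (a.1 * u - a.2 * v) * v) / c = a.2
        field_simp
        linear_combination a.2 * huv
  have hsplit : ∑ c : ZMod p, N c = N 0 + ∑ c ∈ Finset.univ.erase (0 : ZMod p), N c :=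
    (Finset.add_sum_erase _ _ (Finset.mem_univ 0)).symm
  have hconst : ∑ c ∈ Finset.univ.erase (0 : ZMod p), N c = (p - 1) * N 1 := by
    rw [Finset.sum_congr rfl (fun c hc => heq c (Finset.ne_of_mem_erase hc)),
      Finset.sum_const, smul_eq_mul]
    congr 1
    rw [Finset.card_erase_of_mem (Finset.mem_univ 0), Finset.card_univ, ZMod.card]
  have hm1 : N (-1) = N 1 := heq (-1) (by
    simp only [ne_eq, neg_eq_zero]
    exact one_ne_zero)
  have hp2 : 2 ≤ p := hp.two_le
  obtain ⟨d, rfl⟩ : ∃ d, p = d + 2 := ⟨p - 2, by omega⟩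
  have htot2 : (d + 2) * (d + 2) = 1 + (d + 1) * N 1 := by
    rw [← htotal, hsplit, hconst, hzero]
    congr 1
  have hN1 : N 1 = d + 3 := by
    have hz : ((d : ℤ) + 2) * ((d : ℤ) + 2) = 1 + ((d : ℤ) + 1) * (N 1 : ℤ) := by
      exact_mod_cast htot2
    have h3 : ((d : ℤ) + 1) * (N 1 : ℤ) = ((d : ℤ) + 1) * ((d : ℤ) + 3) := by
      linear_combination -hz
    have h4 : (N 1 : ℤ) = (d : ℤ) + 3 :=
      mul_left_cancel₀ (by positivity) h3
    exact_mod_cast h4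
  show N (-1) = d + 2 + 1
  rw [hm1, hN1]

theorem N2_one_one (p m k : ℕ) (hp : p.Prime) (hp4 : p % 4 = 3)
    (hm : Odd m) (hm5 : 5 ≤ m) (hk : 0 < k) (hgcd : Nat.gcd m k = 1)
    (F : Type*) [Field F] [Fintype F] (hF : Fintype.card F = p ^ m) :
    Nat.card {x : F × F //
        x.1 ^ 2 + x.2 ^ 2 = -1 ∧
        x.1 ^ (p ^ k + 1) + x.2 ^ (p ^ k + 1) = -1 ∧
        x.1 ^ (p ^ (2 * k) + 1) + x.2 ^ (p ^ (2 * k) + 1) = -1} = p + 1 := by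
  haveI : Fact p.Prime := ⟨hp⟩
  classical
  -- characteristic of F is p
  have hchar : CharP F p := by
    haveI := ringChar.charP F
    have hrc : (ringChar F).Prime := CharP.char_is_prime F (ringChar F)
    obtain ⟨n, hn⟩ := FiniteField.card F (ringChar F)
    have hd : p ∣ ringChar F ^ (n : ℕ) := by
      rw [← hn.2, hF]
      exact dvd_pow_self p (by omega)
    have : p = ringChar F :=
      (Nat.prime_dvd_prime_iff_eq hp hrc).mp (hp.dvd_of_dvd_pow hd)
    exact this ▸ ringChar.charP F
  -- -1 is not a square in F
  have hmodF : Fintype.card F % 4 = 3 := by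
    obtain ⟨j, hj⟩ := hm
    have hpmod : p ≡ 3 [MOD 4] := by show p % 4 = 3 % 4; omega
    have h3 : p ^ m ≡ 3 [MOD 4] := by
      calc p ^ m ≡ 3 ^ m [MOD 4] := Nat.ModEq.pow m hpmod
        _ = 9 ^ j * 3 := by rw [hj, pow_succ, pow_mul]; norm_num
        _ ≡ 1 ^ j * 3 [MOD 4] := Nat.ModEq.mul_right 3 (Nat.ModEq.pow j (by decide))
        _ = 3 := by norm_num
    rw [hF]
    have h4 : p ^ m % 4 = 3 % 4 := h3
    omega
  have hns : ¬ IsSquare (-1 : F) := by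
    rw [FiniteField.isSquare_neg_one_iff]
    simpa using hmodF
  -- the Frobenius-fixing argument
  have hpodd : Odd (p ^ k) := (Nat.odd_iff.mpr (by omega)).pow
  have key : ∀ x y : F, x ^ 2 + y ^ 2 = -1 → x ^ (p ^ k + 1) + y ^ (p ^ k + 1) = -1 →
      x ^ p ^ k = x ∧ y ^ p ^ k = y := by
    intro x y h1 h2
    have hX : (x ^ p ^ k) ^ 2 + (y ^ p ^ k) ^ 2 = -1 := by
      have hfr := add_pow_char_pow (x ^ 2) (y ^ 2) p k
      rw [h1] at hfr
      rw [← pow_mul, ← pow_mul, mul_comm (p ^ k) 2, pow_mul, pow_mul, ← hfr,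
        hpodd.neg_one_pow]
    have h0 : (x ^ p ^ k - x) ^ 2 + (y ^ p ^ k - y) ^ 2 = 0 := by
      linear_combination hX + h1 - 2 * h2
    obtain ⟨ha, hb⟩ := sq_add_sq_eq_zero' hns h0
    exact ⟨by rwa [sub_eq_zero] at ha, by rwa [sub_eq_zero] at hb⟩
  -- elements fixed by x ↦ x^p are in the image of ZMod p
  set e : ZMod p →+* F := ZMod.castHom dvd_rfl F with he
  have hei : Function.Injective e := e.injective
  have hefix : ∀ a : ZMod p, (e a) ^ p = e a := by
    intro a
    rw [← map_pow, ZMod.pow_card]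
  have hroots : ∀ x : F, x ^ p = x → ∃ a : ZMod p, e a = x := by
    intro x hx
    set f : F[X] := X ^ p - X with hf
    have hfd : f.natDegree = p := by
      rw [hf]
      rw [Polynomial.natDegree_sub_eq_left_of_natDegree_lt]
      · exact Polynomial.natDegree_X_pow p
      · rw [Polynomial.natDegree_X, Polynomial.natDegree_X_pow]
        exact hp.one_lt
    have hf0 : f ≠ 0 := by
      intro h
      rw [h, Polynomial.natDegree_zero] at hfd
      omega
    have hsub : (Finset.univ.image e) ⊆ f.roots.toFinset := by
      intro z hz
      obtain ⟨a, _, rfl⟩ := Finset.mem_image.mp hz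
      rw [Multiset.mem_toFinset, Polynomial.mem_roots hf0]
      simp [hf, Polynomial.IsRoot, hefix a]
    have hcard1 : (Finset.univ.image e).card = p := by
      rw [Finset.card_image_of_injective _ hei, Finset.card_univ, ZMod.card]
    have hcard2 : f.roots.toFinset.card ≤ p := by
      calc f.roots.toFinset.card ≤ Multiset.card f.roots := Multiset.toFinset_card_le _
        _ ≤ f.natDegree := Polynomial.card_roots' f
        _ = p := hfd
    have heqset : (Finset.univ.image e) = f.roots.toFinset :=
      Finset.eq_of_subset_of_card_le hsub (by omega)
    have hxmem : x ∈ f.roots.toFinset := by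
      rw [Multiset.mem_toFinset, Polynomial.mem_roots hf0]
      simp [hf, Polynomial.IsRoot, hx]
    rw [← heqset] at hxmem
    obtain ⟨a, _, ha⟩ := Finset.mem_image.mp hxmem
    exact ⟨a, ha⟩
  -- x^p = x implies x^(p^n+1) = x^2
  have hstab : ∀ x : F, x ^ p = x → ∀ n : ℕ, x ^ (p ^ n + 1) = x ^ 2 := by
    intro x hx n
    have h1 : x ^ p ^ n = x := by
      have := pow_pow_self' (p := p) (a := 1) (x := x) (by simpa using hx) n
      simpa using this
    rw [pow_add, h1, pow_one, pow_two]
  -- build the bijection from the ZMod p circle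
  have hbij : Nat.card {x : F × F //
        x.1 ^ 2 + x.2 ^ 2 = -1 ∧
        x.1 ^ (p ^ k + 1) + x.2 ^ (p ^ k + 1) = -1 ∧
        x.1 ^ (p ^ (2 * k) + 1) + x.2 ^ (p ^ (2 * k) + 1) = -1}
      = Nat.card {y : ZMod p × ZMod p // y.1 ^ 2 + y.2 ^ 2 = -1} := by
    symm
    apply Nat.card_eq_of_bijective
      (f := fun y : {y : ZMod p × ZMod p // y.1 ^ 2 + y.2 ^ 2 = -1} =>
        (⟨(e y.1.1, e y.1.2), by
          have hc1 : (e y.1.1) ^ 2 + (e y.1.2) ^ 2 = (-1 : F) := by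
            rw [← map_pow, ← map_pow, ← map_add, y.2, map_neg, map_one]
          refine ⟨hc1, ?_, ?_⟩
          · rw [hstab _ (hefix _) k, hstab _ (hefix _) k]; exact hc1
          · rw [hstab _ (hefix _) (2 * k), hstab _ (hefix _) (2 * k)]; exact hc1⟩ :
          {x : F × F //
            x.1 ^ 2 + x.2 ^ 2 = -1 ∧
            x.1 ^ (p ^ k + 1) + x.2 ^ (p ^ k + 1) = -1 ∧
            x.1 ^ (p ^ (2 * k) + 1) + x.2 ^ (p ^ (2 * k) + 1) = -1}))
    constructor
    · intro y y' hyy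
      have hv := Subtype.ext_iff.mp hyy
      rw [Prod.mk.injEq] at hv
      exact Subtype.ext (Prod.ext (hei hv.1) (hei hv.2))
    · rintro ⟨⟨x1, x2⟩, h1, h2, h3⟩
      have hfix := key x1 x2 h1 h2
      have hxm : ∀ z : F, z ^ p ^ m = z := by
        intro z; rw [← hF]; exact FiniteField.pow_card z
      have hx1 : x1 ^ p = x1 :=
        pow_p_eq (by omega) hgcd (hxm x1) hfix.1
      have hx2 : x2 ^ p = x2 :=
        pow_p_eq (by omega) hgcd (hxm x2) hfix.2
      obtain ⟨a, ha⟩ := hroots x1 hx1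
      obtain ⟨b, hb⟩ := hroots x2 hx2
      have hab : a ^ 2 + b ^ 2 = -1 := by
        apply hei
        rw [map_add, map_pow, map_pow, ha, hb, map_neg, map_one]
        exact h1
      exact ⟨⟨(a, b), hab⟩, by apply Subtype.ext; simp [ha, hb]⟩
  rw [hbij, Nat.card_eq_fintype_card, Fintype.card_subtype]
  exact circle_count p hp4
end
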